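/- arXiv:1009.6203 — 2 statements merged into one kernel-verified Lean document; each statement's English description precedes it below -/
import Mathlib

section
/- Let m ≥ 1 and consider the standard action of the orthogonal Lie algebra so(m) on V = ℂ^m with its standard symmetric form. For N < m, the space of so(m)-invariants in V^{⊗N} is zero if N is odd, and if N is even it is spanned by the tensors obtained from permutations of (Σ_i e_i ⊗ e_i)^{⊗ N/2}, where {e_i} is an orthonormal basis; moreover these spanning tensors are linearly independent when m ≥ N (first and second fundamental theorems of invariant theory for O(m), infinitesimal form, in the stable range). -/
open scoped TensorProduct
open Matrix

noncomputable section

/-- `V = ℂ^m` with its standard symmetric form. -/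
abbrev Vm (m : ℕ) := Fin m → ℂ

/-- The `N`-th tensor power of `V`. -/
abbrev Tens (m N : ℕ) := ⨂[ℂ] _i : Fin N, Vm m

/-- The diagonal (derivation) action of a matrix on `V^{⊗N}`. -/
def rho {m N : ℕ} (A : Matrix (Fin m) (Fin m) ℂ) : Tens m N →ₗ[ℂ] Tens m N :=
  ∑ j : Fin N, PiTensorProduct.map
    (Function.update (fun _ : Fin N => (LinearMap.id : Vm m →ₗ[ℂ] Vm m)) j A.mulVecLin)

/-- The submodule of `so(m)`-invariants in `V^{⊗N}`. -/
def InvSub (m N : ℕ) : Submodule ℂ (Tens m N) :=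
  ⨅ (A : Matrix (Fin m) (Fin m) ℂ) (_ : Aᵀ = -A), LinearMap.ker (rho A)

/-- The invariant tensor attached to a permutation `σ` (i.e. to the perfect matching
obtained by permuting the factors of `ω^{⊗N/2}`, `ω = Σ_i e_i ⊗ e_i`). -/
def matchTensor (m r : ℕ) (σ : Equiv.Perm (Fin (2 * r))) : Tens m (2 * r) :=
  ∑ g : Fin r → Fin m,
    PiTensorProduct.tprod ℂ (fun j =>
      Pi.single (g ⟨(σ.symm j : ℕ) / 2, by have := (σ.symm j).isLt; omega⟩) (1 : ℂ))

namespace SFTaux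
open Finset Function

variable {m N : ℕ}

abbrev FF (m N : ℕ) := Fin N → Fin m

/-- multiplicity of a value -/
def mult (f : FF m N) (v : Fin m) : ℕ := (Finset.univ.filter (fun j => f j = v)).card

/-- the invariance equations -/
def IsE (c : FF m N → ℂ) : Prop :=
  ∀ (a b : Fin m) (g : FF m N),
    (∑ j, if g j = a then c (Function.update g j b) else 0)
      = ∑ j, if g j = b then c (Function.update g j a) else 0

lemma exists_fresh (s : Finset (Fin m)) (h : s.card < m) : ∃ v, v ∉ s := by
  by_contra hh
  push_neg at hh
  have : (univ : Finset (Fin m)) ⊆ s := fun v _ => hh v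
  have := Finset.card_le_card this
  simp at this
  omega

lemma exists_fresh_fun (hNm : N < m) (f : FF m N) : ∃ v, ∀ j, f j ≠ v := by
  obtain ⟨v, hv⟩ := exists_fresh (univ.image f)
    (lt_of_le_of_lt (le_trans (Finset.card_image_le) (by simp)) hNm)
  exact ⟨v, fun j hj => hv (Finset.mem_image.2 ⟨j, mem_univ _, hj⟩)⟩

lemma mem_fiber {f : FF m N} {v : Fin m} {j : Fin N} :
    j ∈ univ.filter (fun i => f i = v) ↔ f j = v := by simp

lemma mult_pos_of_mem {f : FF m N} {j : Fin N} : 0 < mult f (f j) :=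
  Finset.card_pos.2 ⟨j, mem_fiber.2 rfl⟩

lemma filter_update_ne {f : FF m N} {j : Fin N} {w v : Fin m} (hw : w ≠ v) :
    univ.filter (fun i => Function.update f j w i = v)
      = (univ.filter (fun i => f i = v)).erase j := by
  ext i
  rcases eq_or_ne i j with rfl | hij
  · simp [hw]
  · simp [Function.update_apply, hij]

lemma filter_update_eq {f : FF m N} {j : Fin N} {v : Fin m} :
    univ.filter (fun i => Function.update f j v i = v)
      = insert j ((univ.filter (fun i => f i = v)).erase j) := by
  ext i
  rcases eq_or_ne i j with rfl | hij
  · simp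
  · simp [Function.update_apply, hij]

lemma mult_update_ne_of_eq {f : FF m N} {j : Fin N} {w v : Fin m} (hw : w ≠ v)
    (hj : f j = v) : mult (Function.update f j w) v = mult f v - 1 := by
  rw [mult, filter_update_ne hw, Finset.card_erase_of_mem (mem_fiber.2 hj)]; rfl

lemma mult_update_ne_of_ne {f : FF m N} {j : Fin N} {w v : Fin m} (hw : w ≠ v)
    (hj : f j ≠ v) : mult (Function.update f j w) v = mult f v := by
  rw [mult, filter_update_ne hw, Finset.erase_eq_of_notMem (by simp [hj])]; rfl

lemma mult_update_eq {f : FF m N} {j : Fin N} {v : Fin m} (hj : f j ≠ v) :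
    mult (Function.update f j v) v = mult f v + 1 := by
  rw [mult, filter_update_eq, Finset.card_insert_of_notMem (by simp),
    Finset.erase_eq_of_notMem (by simp [hj])]; rfl

lemma mult_update_other {f : FF m N} {j : Fin N} {w v : Fin m} (hw : w ≠ v)
    (hj : f j ≠ v) : mult (Function.update f j w) v = mult f v :=
  mult_update_ne_of_ne hw hj

lemma sum_mult (f : FF m N) : ∑ v : Fin m, mult f v = N := by
  classical
  have := Finset.card_eq_sum_card_fiberwise (f := f) (s := univ) (t := univ)
    (fun x _ => mem_univ _)
  simpa [mult] using this.symm

/-- vanishing on odd multiplicity -/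
lemma zero_of_odd_mult (hNm : N < m) {c : FF m N → ℂ} (hc : IsE c) :
    ∀ (k : ℕ) (f : FF m N) (v : Fin m), mult f v = 2 * k + 1 → c f = 0 := by
  intro k
  induction k with
  | zero =>
    intro f v hm
    obtain ⟨j₀, hj₀⟩ := Finset.card_eq_one.1 (by simpa [mult] using hm)
    have hfj₀ : f j₀ = v := by
      have : j₀ ∈ univ.filter (fun i => f i = v) := hj₀ ▸ Finset.mem_singleton_self j₀
      exact mem_fiber.1 this
    obtain ⟨a, ha⟩ := exists_fresh_fun hNm f
    have hav : a ≠ v := fun h => ha j₀ (h ▸ hfj₀)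
    set g := Function.update f j₀ a with hg
    have h := hc a v g
    -- LHS of h equals c f
    have hL : (∑ j, if g j = a then c (Function.update g j v) else 0) = c f := by
      have : ∀ j, (if g j = a then c (Function.update g j v) else 0)
          = if j = j₀ then c f else 0 := by
        intro j
        rcases eq_or_ne j j₀ with rfl | hj
        · rw [if_pos (show g j = a by simp [hg]), if_pos rfl, hg,
            Function.update_idem, ← hfj₀, Function.update_eq_self]
        · have : g j = f j := Function.update_of_ne hj _ _
          simp [this, fun h => ha j h, hj]
      rw [Finset.sum_congr rfl (fun j _ => this j), Finset.sum_ite_eq' univ j₀ (fun _ => c f)]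
      simp
    -- RHS of h equals 0
    have hR : (∑ j, if g j = v then c (Function.update g j a) else 0) = 0 := by
      apply Finset.sum_eq_zero
      intro j _
      rcases eq_or_ne j j₀ with rfl | hj
      · rw [if_neg (show ¬ g j = v by simp [hg, hav])]
      · have hgj : g j = f j := Function.update_of_ne hj _ _
        have : f j ≠ v := by
          intro hfv
          have : j ∈ univ.filter (fun i => f i = v) := mem_fiber.2 hfv
          rw [hj₀] at this
          exact hj (Finset.mem_singleton.1 this)
        simp [hgj, this]
    rw [hL, hR] at h
    exact h
  | succ k IH =>
    intro f v hm
    have hv : 0 < mult f v := by omega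
    obtain ⟨j₀, hj₀⟩ := Finset.card_pos.1 hv
    have hfj₀ : f j₀ = v := mem_fiber.1 hj₀
    obtain ⟨b, hb⟩ := exists_fresh_fun hNm f
    have hbv : b ≠ v := fun h => hb j₀ (h ▸ hfj₀)
    set g := Function.update f j₀ b with hg
    have hgv : mult g v = 2 * k + 2 := by
      rw [hg, mult_update_ne_of_eq hbv hfj₀, hm]
      omega
    have h := hc v b g
    have hL : (∑ j, if g j = v then c (Function.update g j b) else 0) = 0 := by
      apply Finset.sum_eq_zero
      intro j _
      by_cases hgj : g j = v
      · rw [if_pos hgj]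
        exact IH _ v (by rw [mult_update_ne_of_eq hbv hgj, hgv]; omega)
      · rw [if_neg hgj]
    have hR : (∑ j, if g j = b then c (Function.update g j v) else 0) = c f := by
      have : ∀ j, (if g j = b then c (Function.update g j v) else 0)
          = if j = j₀ then c f else 0 := by
        intro j
        rcases eq_or_ne j j₀ with rfl | hj
        · rw [if_pos (show g j = b by simp [hg]), if_pos rfl, hg,
            Function.update_idem, ← hfj₀, Function.update_eq_self]
        · have hgj : g j = f j := Function.update_of_ne hj _ _
          simp [hgj, fun h => hb j h, hj]
      rw [Finset.sum_congr rfl (fun j _ => this j), Finset.sum_ite_eq' univ j₀ (fun _ => c f)]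
      simp
    rw [hL, hR] at h
    exact h.symm



/-- renaming of a block of size two -/
def ren (f : FF m N) (v w : Fin m) : FF m N := fun i => if f i = v then w else f i

lemma rename2 {c : FF m N → ℂ} (hc : IsE c) (f : FF m N) (v w : Fin m)
    (hm : mult f v = 2) (hw : ∀ j, f j ≠ w) : c (ren f v w) = c f := by
  obtain ⟨j₁, j₂, hj12, hset⟩ := Finset.card_eq_two.1 (by simpa [mult] using hm)
  have hfj₁ : f j₁ = v := mem_fiber.1 (hset ▸ (by simp : j₁ ∈ ({j₁, j₂} : Finset (Fin N))))
  have hfj₂ : f j₂ = v := mem_fiber.1 (hset ▸ (by simp : j₂ ∈ ({j₁, j₂} : Finset (Fin N))))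
  have hvw : v ≠ w := fun h => hw j₁ (h ▸ hfj₁)
  set g := Function.update f j₁ w with hg
  have h := hc v w g
  have hL : (∑ j, if g j = v then c (Function.update g j w) else 0)
      = c (ren f v w) := by
    have hterm : ∀ j, (if g j = v then c (Function.update g j w) else 0)
        = if j = j₂ then c (ren f v w) else 0 := by
      intro j
      by_cases hj1 : j = j₁
      · rw [if_neg (show ¬ g j = v by rw [hj1, hg]; simp [hvw.symm]),
          if_neg (by rw [hj1]; exact hj12)]
      · have hgj : g j = f j := Function.update_of_ne hj1 _ _
        by_cases hj2 : j = j₂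
        · subst hj2
          rw [if_pos (hgj.trans hfj₂), if_pos rfl]
          congr 1
          funext i
          by_cases hij : i = j
          · rw [hij, Function.update_self]
            simp [ren, hfj₂]
          · rw [Function.update_of_ne hij]
            by_cases hi1 : i = j₁
            · rw [hi1, hg, Function.update_self]
              simp [ren, hfj₁]
            · have hgi : g i = f i := Function.update_of_ne hi1 _ _
              have hfi : f i ≠ v := by
                intro hfi
                have hmem : i ∈ ({j₁, j} : Finset (Fin N)) := hset ▸ mem_fiber.2 hfi
                rcases Finset.mem_insert.1 hmem with h' | h'
                · exact hi1 h'
                · exact hij (Finset.mem_singleton.1 h')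
              rw [hgi]
              simp [ren, hfi]
        · have hfj : f j ≠ v := by
            intro hfi
            have hmem : j ∈ ({j₁, j₂} : Finset (Fin N)) := hset ▸ mem_fiber.2 hfi
            rcases Finset.mem_insert.1 hmem with h' | h'
            · exact hj1 h'
            · exact hj2 (Finset.mem_singleton.1 h')
          rw [if_neg (by rw [hgj]; exact hfj), if_neg hj2]
    rw [Finset.sum_congr rfl (fun j _ => hterm j),
      Finset.sum_ite_eq' univ j₂ (fun _ => c (ren f v w))]
    simp
  have hR : (∑ j, if g j = w then c (Function.update g j v) else 0) = c f := by
    have hterm : ∀ j, (if g j = w then c (Function.update g j v) else 0)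
        = if j = j₁ then c f else 0 := by
      intro j
      by_cases hj1 : j = j₁
      · subst hj1
        rw [if_pos (by rw [hg]; simp), if_pos rfl, hg, Function.update_idem, ← hfj₁,
          Function.update_eq_self]
      · have hgj : g j = f j := Function.update_of_ne hj1 _ _
        rw [if_neg (by rw [hgj]; exact hw j), if_neg hj1]
    rw [Finset.sum_congr rfl (fun j _ => hterm j),
      Finset.sum_ite_eq' univ j₁ (fun _ => c f)]
    simp
  rw [hL, hR] at h
  exact h

/-- the splitting identity -/
lemma split {c : FF m N → ℂ} (hc : IsE c) (f : FF m N) (v b : Fin m) (j₁ : Fin N)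
    (hj₁ : f j₁ = v) (hb : ∀ j, f j ≠ b) :
    c f = ∑ j ∈ (univ.filter (fun i => f i = v)).erase j₁,
      c (Function.update (Function.update f j₁ b) j b) := by
  have hvb : v ≠ b := fun h => hb j₁ (h ▸ hj₁)
  set g := Function.update f j₁ b with hg
  have h := hc v b g
  have hL : (∑ j, if g j = v then c (Function.update g j b) else 0)
      = ∑ j ∈ (univ.filter (fun i => f i = v)).erase j₁,
        c (Function.update (Function.update f j₁ b) j b) := by
    rw [← Finset.sum_filter]
    apply Finset.sum_congr
    · ext i
      simp only [Finset.mem_filter, Finset.mem_univ, true_and, Finset.mem_erase]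
      by_cases hi : i = j₁
      · rw [hi, hg]
        simp [hvb.symm]
      · rw [hg, Function.update_of_ne hi]
        simp [hi]
    · intro j _
      rfl
  have hR : (∑ j, if g j = b then c (Function.update g j v) else 0) = c f := by
    have hterm : ∀ j, (if g j = b then c (Function.update g j v) else 0)
        = if j = j₁ then c f else 0 := by
      intro j
      rcases eq_or_ne j j₁ with rfl | hj1
      · rw [if_pos (by simp [hg]), if_pos rfl, hg, Function.update_idem, ← hj₁,
          Function.update_eq_self]
      · have hgj : g j = f j := Function.update_of_ne hj1 _ _
        rw [if_neg (by rw [hgj]; exact hb j), if_neg hj1]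
    rw [Finset.sum_congr rfl (fun j _ => hterm j),
      Finset.sum_ite_eq' univ j₁ (fun _ => c f)]
    simp
  rw [hL, hR] at h
  exact h.symm



-- real content starts here
def Hall (f : FF m N) : Prop := ∀ v, mult f v = 0 ∨ mult f v = 2

lemma hall_mem {f : FF m N} (h : Hall f) (j : Fin N) : mult f (f j) = 2 := by
  rcases h (f j) with h0 | h2
  · exfalso
    have : j ∈ univ.filter (fun i => f i = f j) := mem_fiber.2 rfl
    rw [Finset.card_eq_zero.1 h0] at this
    simp at this
  · exact h2

lemma hall_of_levels {f f' : FF m N} (hlev : ∀ i j, f i = f j ↔ f' i = f' j)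
    (h : Hall f) : Hall f' := by
  intro v
  by_cases hv : ∃ j, f' j = v
  · obtain ⟨j, hj⟩ := hv
    right
    have hset : univ.filter (fun i => f' i = v) = univ.filter (fun i => f i = f j) := by
      ext i
      simp only [mem_filter, mem_univ, true_and]
      rw [← hj]
      exact (hlev i j).symm
    have : mult f' v = mult f (f j) := by rw [mult, mult, hset]
    rw [this]
    exact hall_mem h j
  · left
    push_neg at hv
    rw [mult, Finset.card_eq_zero, Finset.filter_eq_empty_iff]
    intro i _
    exact hv i

lemma card_image_of_hall {f : FF m N} (h : Hall f) : 2 * (univ.image f).card = N := by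
  have h1 : (univ : Finset (Fin N)).card
      = ∑ v ∈ univ.image f, (univ.filter (fun j => f j = v)).card :=
    Finset.card_eq_sum_card_fiberwise (fun x _ => Finset.mem_image_of_mem f (mem_univ x))
  have h2 : ∀ v ∈ univ.image f, (univ.filter (fun j => f j = v)).card = 2 := by
    intro v hv
    obtain ⟨j, _, hj⟩ := Finset.mem_image.1 hv
    subst hj
    exact hall_mem h j
  rw [Finset.sum_congr rfl h2, Finset.sum_const, smul_eq_mul, mul_comm] at h1
  simpa using h1.symm

lemma ren_levels {f : FF m N} {v w : Fin m} (hw : ∀ i, f i ≠ w) (i j : Fin N) :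
    (ren f v w i = ren f v w j) ↔ f i = f j := by
  unfold ren
  by_cases hi : f i = v <;> by_cases hj : f j = v
  · rw [if_pos hi, if_pos hj]
    simp [hi, hj]
  · rw [if_pos hi, if_neg hj]
    constructor
    · intro h
      exact absurd h.symm (hw j)
    · intro h
      exact absurd (h ▸ hi) hj
  · rw [if_neg hi, if_pos hj]
    constructor
    · intro h
      exact absurd h (hw i)
    · intro h
      exact absurd (h.symm ▸ hj) hi
  · rw [if_neg hi, if_neg hj]

lemma claimR (hNm : N < m) {c : FF m N → ℂ} (hc : IsE c) :
    ∀ (n : ℕ) (f f' : FF m N), Hall f → (∀ i j, f i = f j ↔ f' i = f' j) →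
      (univ.filter (fun j => f j ≠ f' j)).card = n → c f = c f' := by
  intro n
  induction n using Nat.strong_induction_on with
  | _ n IH =>
  intro f f' hall hlev hcard
  rcases Nat.eq_zero_or_pos n with rfl | hpos
  · have : ∀ j, f j = f' j := by
      intro j
      by_contra hj
      have hj' : j ∈ univ.filter (fun j => f j ≠ f' j) := by simp [hj]
      rw [Finset.card_eq_zero.1 hcard] at hj'
      simp at hj'
    exact congrArg c (funext this)
  · have hne : (univ.filter (fun j => f j ≠ f' j)).Nonempty :=
      Finset.card_pos.1 (by omega)
    obtain ⟨j₀, hj₀mem⟩ := hne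
    have hj₀ : f j₀ ≠ f' j₀ := (Finset.mem_filter.1 hj₀mem).2
    have hall' : Hall f' := hall_of_levels hlev hall
    by_cases hwim : ∀ i, f i ≠ f' j₀
    · -- single rename of the block of j₀
      set f₂ := ren f (f j₀) (f' j₀) with hf₂
      have hr : c f₂ = c f := rename2 hc f _ _ (hall_mem hall j₀) hwim
      have hlev2 : ∀ i j, f₂ i = f₂ j ↔ f i = f j := ren_levels hwim
      have hsubset : univ.filter (fun j => f₂ j ≠ f' j)
          ⊆ univ.filter (fun j => f j ≠ f' j) := by
        intro j hj
        simp only [Finset.mem_filter, Finset.mem_univ, true_and] at hj ⊢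
        intro hjeq
        apply hj
        have hfjv : f j ≠ f j₀ := by
          intro hfv
          have h5 : f' j = f' j₀ := (hlev j j₀).1 hfv
          exact hwim j (by rw [hjeq, h5])
        show (if f j = f j₀ then f' j₀ else f j) = f' j
        rw [if_neg hfjv]
        exact hjeq
      have hj₀not : j₀ ∉ univ.filter (fun j => f₂ j ≠ f' j) := by
        simp only [Finset.mem_filter, Finset.mem_univ, true_and, not_not]
        show (if f j₀ = f j₀ then f' j₀ else f j₀) = f' j₀
        rw [if_pos rfl]
      have hsub : univ.filter (fun j => f₂ j ≠ f' j)
          ⊂ univ.filter (fun j => f j ≠ f' j) :=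
        (Finset.ssubset_iff_of_subset hsubset).2 ⟨j₀, hj₀mem, hj₀not⟩
      have hlt := Finset.card_lt_card hsub
      rw [hcard] at hlt
      have hmain := IH _ hlt f₂ f' (hall_of_levels (fun i j => (hlev2 i j).symm) hall)
        (fun i j => (hlev2 i j).trans (hlev i j)) rfl
      rw [← hmain, hr]
    · push_neg at hwim
      obtain ⟨j₁, hj₁⟩ := hwim
      have hcf : 2 * (univ.image f).card = N := card_image_of_hall hall
      have hcf' : 2 * (univ.image f').card = N := card_image_of_hall hall'
      have hunion : ((univ.image f) ∪ (univ.image f')).card < m := by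
        have := Finset.card_union_le (univ.image f) (univ.image f')
        omega
      obtain ⟨u, hu⟩ := exists_fresh _ hunion
      have huf : ∀ i, f i ≠ u := fun i h =>
        hu (Finset.mem_union_left _ (h ▸ Finset.mem_image_of_mem f (mem_univ i)))
      have huf' : ∀ i, f' i ≠ u := fun i h =>
        hu (Finset.mem_union_right _ (h ▸ Finset.mem_image_of_mem f' (mem_univ i)))
      set f₂ := ren f (f' j₀) u with hf₂
      have h2 : c f₂ = c f := rename2 hc f _ u (hj₁ ▸ hall_mem hall j₁) huf
      have hlev12 : ∀ i j, f₂ i = f₂ j ↔ f i = f j := ren_levels huf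
      have hall2 : Hall f₂ := hall_of_levels (fun i j => (hlev12 i j).symm) hall
      have huw : u ≠ f' j₀ := fun h => huf j₁ (hj₁.trans h.symm)
      have hw2 : ∀ i, f₂ i ≠ f' j₀ := by
        intro i
        show (if f i = f' j₀ then u else f i) ≠ f' j₀
        by_cases hfi : f i = f' j₀
        · rw [if_pos hfi]; exact huw
        · rw [if_neg hfi]; exact hfi
      have hf₂j₀ : f₂ j₀ = f j₀ := by
        show (if f j₀ = f' j₀ then u else f j₀) = f j₀
        rw [if_neg hj₀]
      have hmult2v : mult f₂ (f j₀) = 2 := by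
        have := hall_mem hall2 j₀
        rwa [hf₂j₀] at this
      set f₃ := ren f₂ (f j₀) (f' j₀) with hf₃
      have h3 : c f₃ = c f₂ := rename2 hc f₂ _ _ hmult2v hw2
      have hlev23 : ∀ i j, f₃ i = f₃ j ↔ f₂ i = f₂ j := ren_levels hw2
      have hlev3 : ∀ i j, f₃ i = f₃ j ↔ f i = f j :=
        fun i j => (hlev23 i j).trans (hlev12 i j)
      have hall3 : Hall f₃ := hall_of_levels (fun i j => (hlev3 i j).symm) hall
      have hsubset : univ.filter (fun j => f₃ j ≠ f' j)
          ⊆ univ.filter (fun j => f j ≠ f' j) := by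
        intro j hj
        simp only [Finset.mem_filter, Finset.mem_univ, true_and] at hj ⊢
        intro hjeq
        apply hj
        have hfjw : f j ≠ f' j₀ := by
          intro hfw
          have h5 : f j = f j₀ := (hlev j j₀).2 (by rw [← hjeq]; exact hfw)
          exact hj₀ (by rw [← h5, hfw])
        have hf2j : f₂ j = f j := by
          show (if f j = f' j₀ then u else f j) = f j
          rw [if_neg hfjw]
        have hfjv : f j ≠ f j₀ := by
          intro hfv
          have h5 : f' j = f' j₀ := (hlev j j₀).1 hfv
          exact hfjw (by rw [← hjeq] at h5; exact h5)
        show (if f₂ j = f j₀ then f' j₀ else f₂ j) = f' j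
        rw [hf2j, if_neg hfjv]
        exact hjeq
      have hj₀not : j₀ ∉ univ.filter (fun j => f₃ j ≠ f' j) := by
        simp only [Finset.mem_filter, Finset.mem_univ, true_and, not_not]
        show (if f₂ j₀ = f j₀ then f' j₀ else f₂ j₀) = f' j₀
        rw [if_pos hf₂j₀]
      have hsub : univ.filter (fun j => f₃ j ≠ f' j)
          ⊂ univ.filter (fun j => f j ≠ f' j) :=
        (Finset.ssubset_iff_of_subset hsubset).2 ⟨j₀, hj₀mem, hj₀not⟩
      have hlt := Finset.card_lt_card hsub
      rw [hcard] at hlt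
      have hmain := IH _ hlt f₃ f' hall3
        (fun i j => (hlev3 i j).trans (hlev i j)) rfl
      rw [← hmain, h3, h2]



-- new content
section Perm
variable {r : ℕ}

def flip2 (p : Fin (2*r)) : Fin (2*r) := ⟨2*((p:ℕ)/2) + (1 - (p:ℕ)%2), by omega⟩

lemma flip2_ne (p : Fin (2*r)) : flip2 p ≠ p := by
  intro h
  have := congrArg Fin.val h
  simp only [flip2] at this
  omega

lemma flip2_val_div (p : Fin (2*r)) : ((flip2 p : Fin (2*r)) : ℕ)/2 = (p:ℕ)/2 := by
  simp only [flip2]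
  omega

lemma flip2_flip2 (p : Fin (2*r)) : flip2 (flip2 p) = p := by
  apply Fin.ext
  simp only [flip2]
  omega

lemma eq_or_flip2 {p q : Fin (2*r)} (h : (q:ℕ)/2 = (p:ℕ)/2) : q = p ∨ q = flip2 p := by
  rcases eq_or_ne (q:ℕ) (p:ℕ) with h' | h'
  · exact Or.inl (Fin.ext h')
  · right
    apply Fin.ext
    simp only [flip2]
    omega

def blk (σ : Equiv.Perm (Fin (2*r))) (j : Fin (2*r)) : Fin r :=
  ⟨((σ.symm j : Fin (2*r)) : ℕ)/2, by have := (σ.symm j).isLt; omega⟩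

def iot (σ : Equiv.Perm (Fin (2*r))) (j : Fin (2*r)) : Fin (2*r) :=
  σ (flip2 (σ.symm j))

lemma iot_ne (σ : Equiv.Perm (Fin (2*r))) (j : Fin (2*r)) : iot σ j ≠ j := by
  intro h
  have h2 : σ (flip2 (σ.symm j)) = σ (σ.symm j) := by
    rw [Equiv.apply_symm_apply]
    exact h
  exact flip2_ne _ (σ.injective h2)

lemma iot_iot (σ : Equiv.Perm (Fin (2*r))) (j : Fin (2*r)) : iot σ (iot σ j) = j := by
  unfold iot
  rw [Equiv.symm_apply_apply, flip2_flip2, Equiv.apply_symm_apply]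

lemma blk_iot (σ : Equiv.Perm (Fin (2*r))) (j : Fin (2*r)) : blk σ (iot σ j) = blk σ j := by
  apply Fin.ext
  show ((σ.symm (iot σ j) : Fin (2*r)) : ℕ)/2 = _
  unfold iot
  rw [Equiv.symm_apply_apply]
  exact flip2_val_div _

lemma blk_eq_iff (σ : Equiv.Perm (Fin (2*r))) (i j : Fin (2*r)) :
    blk σ i = blk σ j ↔ i = j ∨ i = iot σ j := by
  constructor
  · intro h
    have hval : ((σ.symm i : Fin (2*r)) : ℕ)/2 = ((σ.symm j : Fin (2*r)) : ℕ)/2 :=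
      congrArg Fin.val h
    rcases eq_or_flip2 hval with h' | h'
    · left
      have := congrArg σ h'
      rwa [Equiv.apply_symm_apply, Equiv.apply_symm_apply] at this
    · right
      have := congrArg σ h'
      rwa [Equiv.apply_symm_apply] at this
  · rintro (rfl | rfl)
    · rfl
    · exact blk_iot σ j

def ell (h : r ≤ m) (σ : Equiv.Perm (Fin (2*r))) : FF m (2*r) :=
  fun j => Fin.castLE h (blk σ j)

lemma ell_eq_iff (h : r ≤ m) (σ : Equiv.Perm (Fin (2*r))) (i j : Fin (2*r)) :
    ell h σ i = ell h σ j ↔ blk σ i = blk σ j := by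
  unfold ell
  exact Fin.castLE_inj

lemma hall_ell (h : r ≤ m) (σ : Equiv.Perm (Fin (2*r))) : Hall (ell h σ) := by
  intro v
  by_cases hv : ∃ j, ell h σ j = v
  · obtain ⟨j, hj⟩ := hv
    right
    have hset : univ.filter (fun i => ell h σ i = v) = {j, iot σ j} := by
      ext i
      simp only [Finset.mem_filter, Finset.mem_univ, true_and, Finset.mem_insert,
        Finset.mem_singleton]
      rw [← hj, ell_eq_iff, blk_eq_iff]
    rw [mult, hset, Finset.card_insert_of_notMem (by
        simp only [Finset.mem_singleton]
        exact fun hh => iot_ne σ j (by rw [← hh]) ), Finset.card_singleton]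
  · left
    push_neg at hv
    rw [mult, Finset.card_eq_zero, Finset.filter_eq_empty_iff]
    intro i _
    exact hv i

lemma two_elt_helper {α : Type*} [DecidableEq α] {s : Finset α} (h : s.card = 2)
    {a b c : α} (ha : a ∈ s) (hb : b ∈ s) (hc : c ∈ s) (hac : a ≠ c) (hbc : b ≠ c) :
    a = b := by
  obtain ⟨x, y, hxy, rfl⟩ := Finset.card_eq_two.1 h
  simp only [Finset.mem_insert, Finset.mem_singleton] at ha hb hc
  rcases ha with rfl | rfl <;> rcases hb with rfl | rfl <;> rcases hc with rfl | rfl <;> tauto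

lemma exists_perm (hrm : r ≤ m) (f : FF m (2*r)) (hall : Hall f) :
    ∃ σ : Equiv.Perm (Fin (2*r)), ∀ i j, ell hrm σ i = ell hrm σ j ↔ f i = f j := by
  classical
  have hR : (univ.image f).card = r := by
    have := card_image_of_hall hall
    omega
  set iso := (univ.image f).orderIsoOfFin hR with hiso
  set idx : Fin (2*r) → Fin r :=
    fun j => iso.symm ⟨f j, Finset.mem_image_of_mem f (mem_univ j)⟩ with hidx
  have idx_iff : ∀ i j, idx i = idx j ↔ f i = f j := by
    intro i j
    constructor
    · intro h
      have := congrArg iso h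
      rw [OrderIso.apply_symm_apply, OrderIso.apply_symm_apply] at this
      exact congrArg Subtype.val this
    · intro h
      simp only [hidx]
      congr 1
      exact Subtype.ext h
  set pos : Fin (2*r) → ℕ := fun j =>
    if j = (univ.filter (fun i => f i = f j)).min' ⟨j, mem_fiber.2 rfl⟩ then 0 else 1
    with hpos
  have hposle : ∀ j, pos j ≤ 1 := by
    intro j
    simp only [hpos]
    split <;> omega
  set ρ : Fin (2*r) → Fin (2*r) :=
    fun j => ⟨2*((idx j : Fin r) : ℕ) + pos j, by
      have h1 := (idx j).isLt
      have h2 := hposle j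
      omega⟩ with hρ
  have hinj : Function.Injective ρ := by
    intro i j hij
    have hval : 2*((idx i : Fin r) : ℕ) + pos i = 2*((idx j : Fin r) : ℕ) + pos j :=
      congrArg Fin.val hij
    have hpi := hposle i
    have hpj := hposle j
    have hidxeq : idx i = idx j := Fin.ext (by omega)
    have hposeq : pos i = pos j := by omega
    have hfij : f i = f j := (idx_iff i j).1 hidxeq
    have hminij : (univ.filter (fun k => f k = f i)).min' ⟨i, mem_fiber.2 rfl⟩
        = (univ.filter (fun k => f k = f j)).min' ⟨j, mem_fiber.2 rfl⟩ := by
      simp only [hfij]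
    by_cases hi0 : i = (univ.filter (fun k => f k = f i)).min' ⟨i, mem_fiber.2 rfl⟩
    · have hpi0 : pos i = 0 := by
        simp only [hpos]
        rw [if_pos hi0]
      have hpj0 : pos j = 0 := by omega
      have hj0 : j = (univ.filter (fun k => f k = f j)).min' ⟨j, mem_fiber.2 rfl⟩ := by
        by_contra hcon
        simp only [hpos] at hpj0
        rw [if_neg hcon] at hpj0
        omega
      rw [hi0, hj0]
      exact hminij
    · have hpi1 : pos i = 1 := by
        simp only [hpos]
        rw [if_neg hi0]
      have hpj1 : pos j = 1 := by omega
      have hjnot : ¬ j = (univ.filter (fun k => f k = f j)).min' ⟨j, mem_fiber.2 rfl⟩ := by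
        intro hcon
        have : pos j = 0 := by
          simp only [hpos]
          rw [if_pos hcon]
        omega
      have hmin_mem : (univ.filter (fun k => f k = f i)).min' ⟨i, mem_fiber.2 rfl⟩
          ∈ univ.filter (fun k => f k = f i) := Finset.min'_mem _ _
      exact two_elt_helper (hall_mem hall i) (mem_fiber.2 rfl)
        (mem_fiber.2 hfij.symm) hmin_mem hi0
        (fun hcon => hjnot (hcon.trans hminij))
  have hbij : Function.Bijective ρ := Finite.injective_iff_bijective.1 hinj
  set e := Equiv.ofBijective ρ hbij with he
  refine ⟨e.symm, ?_⟩
  have hsymm : ∀ j, (e.symm).symm j = ρ j := by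
    intro j
    rw [Equiv.symm_symm]
    rfl
  have hblk : ∀ j, blk e.symm j = idx j := by
    intro j
    apply Fin.ext
    show ((e.symm.symm j : Fin (2*r)) : ℕ)/2 = _
    rw [hsymm]
    show (2*((idx j : Fin r) : ℕ) + pos j)/2 = _
    have := hposle j
    omega
  intro i j
  rw [ell_eq_iff, hblk, hblk, idx_iff]

end Perm


section Perm2
variable {r : ℕ}
/-- the measure for the strong induction -/
def mu (f : FF m N) : ℕ := ∑ v : Fin m, (mult f v)^2

lemma lemL {r : ℕ} (hrm : 2*r < m) {c : FF m (2*r) → ℂ} (hc : IsE c)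
    (h0 : ∀ σ : Equiv.Perm (Fin (2*r)), c (ell (by omega) σ) = 0) :
    ∀ f, c f = 0 := by
  have hrm' : r ≤ m := by omega
  have key : ∀ (n : ℕ) (f : FF m (2*r)), mu f = n → c f = 0 := by
    intro n
    induction n using Nat.strong_induction_on with
    | _ n IH =>
    intro f hmu
    by_cases hodd : ∃ v k, mult f v = 2*k+1
    · obtain ⟨v, k, hk⟩ := hodd
      exact zero_of_odd_mult hrm hc k f v hk
    · push_neg at hodd
      by_cases hbig : ∃ v, 3 ≤ mult f v
      · obtain ⟨v, hv3⟩ := hbig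
        have hfib : (univ.filter (fun i => f i = v)).Nonempty := by
          apply Finset.card_pos.1
          have : (univ.filter (fun i => f i = v)).card = mult f v := rfl
          omega
        obtain ⟨j₁, hj₁mem⟩ := hfib
        have hj₁ : f j₁ = v := mem_fiber.1 hj₁mem
        obtain ⟨b, hb⟩ := exists_fresh_fun hrm f
        have hbv : b ≠ v := fun h => hb j₁ (h ▸ hj₁)
        have hmfb : mult f b = 0 := by
          rw [mult, Finset.card_eq_zero, Finset.filter_eq_empty_iff]
          intro i _
          exact hb i
        rw [split hc f v b j₁ hj₁ hb]
        apply Finset.sum_eq_zero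
        intro j hjmem
        have hjne : j ≠ j₁ := (Finset.mem_erase.1 hjmem).1
        have hjv : f j = v := mem_fiber.1 (Finset.mem_erase.1 hjmem).2
        set g := Function.update f j₁ b with hg
        set f2 := Function.update g j b with hf2
        have hgj : g j = v := by
          rw [hg, Function.update_of_ne hjne]
          exact hjv
        -- multiplicities of f2
        have hm_v : mult f2 v = mult f v - 2 := by
          rw [hf2, mult_update_ne_of_eq hbv hgj, hg, mult_update_ne_of_eq hbv hj₁]
          omega
        have hm_b : mult f2 b = 2 := by
          have h1 : mult g b = mult f b + 1 := by
            rw [hg]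
            exact mult_update_eq (fun h => hb j₁ h)
          have h2 : g j ≠ b := by
            rw [hgj]
            exact fun h => hbv h.symm
          rw [hf2, mult_update_eq h2, h1, hmfb]
        have hm_other : ∀ u, u ≠ v → u ≠ b → mult f2 u = mult f u := by
          intro u huv hub
          have h1 : mult g u = mult f u := by
            rw [hg]
            exact mult_update_ne_of_ne (fun h => hub h.symm) (by rw [hj₁]; exact fun h => huv h.symm)
          rw [hf2, mult_update_ne_of_ne (fun h => hub h.symm) (by rw [hgj]; exact fun h => huv h.symm), h1]
        -- measure decreases
        have hvb' : v ≠ b := fun h => hbv h.symm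
        have hmu_split : ∀ (fx : FF m (2*r)), mu fx
            = (mult fx v)^2 + ((mult fx b)^2 + ∑ u ∈ (univ.erase v).erase b, (mult fx u)^2) := by
          intro fx
          rw [mu, ← Finset.add_sum_erase _ _ (mem_univ v),
            ← Finset.add_sum_erase _ _ (Finset.mem_erase.2 ⟨hbv, mem_univ b⟩)]
        have hrest : ∑ u ∈ (univ.erase v).erase b, (mult f2 u)^2
            = ∑ u ∈ (univ.erase v).erase b, (mult f u)^2 := by
          apply Finset.sum_congr rfl
          intro u hu
          have h1 := Finset.mem_erase.1 hu
          have h2 := Finset.mem_erase.1 h1.2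
          rw [hm_other u h2.1 h1.1]
        have hlt : mu f2 < mu f := by
          rw [hmu_split f2, hmu_split f, hrest, hm_v, hm_b, hmfb]
          have h3 : 3 ≤ mult f v := hv3
          obtain ⟨K, hK⟩ : ∃ K, mult f v = K + 3 := ⟨mult f v - 3, by omega⟩
          rw [hK]
          have e1 : (K + 3 - 2)^2 = K^2 + 2*K + 1 := by
            have : K + 3 - 2 = K + 1 := by omega
            rw [this]
            ring
          have e2 : (K + 3)^2 = K^2 + 6*K + 9 := by ring
          rw [e1, e2]
          omega
        rw [hmu] at hlt
        exact IH _ hlt f2 rfl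
      · push_neg at hbig
        have hall : Hall f := by
          intro v
          have h2 := hbig v
          rcases Nat.lt_or_ge (mult f v) 1 with h | h
          · left; omega
          · rcases Nat.lt_or_ge (mult f v) 2 with h' | h'
            · exfalso
              exact absurd (show mult f v = 2*0+1 by omega) (hodd v 0)
            · right; omega
        obtain ⟨σ, hσ⟩ := exists_perm hrm' f hall
        have := claimR hrm hc _ f (ell hrm' σ) hall (fun i j => (hσ i j).symm) rfl
        rw [this]
        exact h0 σ
  intro f
  exact key (mu f) f rfl

lemma zero_of_oddN (hNm : N < m) (hN : Odd N) {c : FF m N → ℂ} (hc : IsE c) :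
    ∀ f, c f = 0 := by
  intro f
  have hsum : ∑ v : Fin m, mult f v = N := by
    have := Finset.card_eq_sum_card_fiberwise
      (f := f) (s := univ) (t := univ) (fun x _ => mem_univ _)
    simpa [mult] using this.symm
  have hodd : ∃ v, ¬ Even (mult f v) := by
    by_contra hcon
    push_neg at hcon
    have : Even N := by
      rw [← hsum]
      exact Finset.even_sum (fun v => mult f v) (fun v _ => hcon v)
    exact (Nat.not_even_iff_odd.2 hN) this
  obtain ⟨v, hv⟩ := hodd
  have : Odd (mult f v) := Nat.not_even_iff_odd.1 hv
  obtain ⟨k, hk⟩ := this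
  exact zero_of_odd_mult hNm hc k f v hk




end Perm2



def vb (f : FF m N) : Tens m N := PiTensorProduct.tprod ℂ (fun j => Pi.single (f j) (1:ℂ))

def lam (f : FF m N) : Tens m N →ₗ[ℂ] ℂ :=
  PiTensorProduct.lift ((MultilinearMap.mkPiAlgebra ℂ (Fin N) ℂ).compLinearMap
    (fun j => LinearMap.proj (f j)))

lemma lam_tprod (f : FF m N) (x : Fin N → Vm m) :
    lam f (PiTensorProduct.tprod ℂ x) = ∏ j, x j (f j) := by
  rw [lam, PiTensorProduct.lift.tprod]
  rfl

lemma lam_vb (f g : FF m N) : lam f (vb g) = if g = f then 1 else 0 := by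
  rw [vb, lam_tprod]
  have h1 : ∀ j, (Pi.single (g j) (1:ℂ) : Fin m → ℂ) (f j) = if f j = g j then 1 else 0 :=
    fun j => by rw [Pi.single_apply]
  rw [Finset.prod_congr rfl fun j _ => h1 j, Finset.prod_boole]
  have hiff : (∀ j ∈ (univ : Finset (Fin N)), f j = g j) ↔ g = f := by
    constructor
    · intro h
      funext j
      exact (h j (mem_univ j)).symm
    · intro h j _
      rw [h]
  simp only [hiff]

lemma pi_expand (x : Vm m) : x = ∑ v, x v • (Pi.single v 1 : Vm m) := by
  funext u
  rw [Finset.sum_apply]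
  have h1 : ∀ v, (x v • (Pi.single v 1 : Vm m)) u = if u = v then x v else 0 := by
    intro v
    rw [Pi.smul_apply, Pi.single_apply, smul_eq_mul]
    split <;> simp
  rw [Finset.sum_congr rfl fun v _ => h1 v, Finset.sum_ite_eq]
  simp

lemma tprod_expand (x : Fin N → Vm m) :
    (PiTensorProduct.tprod ℂ x : Tens m N) = ∑ f : FF m N, (∏ j, x j (f j)) • vb f := by
  conv_lhs => rw [show x = (fun j => ∑ v, x j v • (Pi.single v 1 : Vm m)) from
    funext fun j => pi_expand (x j)]
  rw [MultilinearMap.map_sum]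
  apply Finset.sum_congr rfl
  intro f _
  rw [MultilinearMap.map_smul_univ]
  rfl

lemma top_le_span : ⊤ ≤ Submodule.span ℂ (Set.range (vb : FF m N → Tens m N)) := by
  intro T htop
  clear htop
  induction T using PiTensorProduct.induction_on with
  | smul_tprod r x =>
    rw [tprod_expand]
    apply Submodule.smul_mem
    apply Submodule.sum_mem
    intro f _
    exact Submodule.smul_mem _ _ (Submodule.subset_span ⟨f, rfl⟩)
  | add x y hx hy => exact Submodule.add_mem _ hx hy

lemma lam_sum (l : FF m N → ℂ) (f : FF m N) :
    lam f (∑ g, l g • vb g) = l f := by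
  rw [map_sum]
  have h1 : ∀ g, lam f (l g • vb g) = if g = f then l g else 0 := by
    intro g
    rw [LinearMap.map_smul, lam_vb, smul_eq_mul]
    split <;> simp
  rw [Finset.sum_congr rfl fun g _ => h1 g, Finset.sum_ite_eq' univ f l]
  simp

lemma indep_vb : LinearIndependent ℂ (vb : FF m N → Tens m N) := by
  rw [Fintype.linearIndependent_iff]
  intro l hl f
  have := congrArg (lam f) hl
  rw [lam_sum, map_zero] at this
  exact this

def bT : Module.Basis (FF m N) ℂ (Tens m N) := Module.Basis.mk indep_vb top_le_span

lemma fdTens : FiniteDimensional ℂ (Tens m N) :=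
  Module.Finite.of_basis (bT (m := m) (N := N))

lemma expand (T : Tens m N) : T = ∑ f, lam f T • vb f := by
  obtain ⟨cμ, hμ⟩ := (Submodule.mem_span_range_iff_exists_fun ℂ).1 (top_le_span (Submodule.mem_top : T ∈ ⊤))
  rw [← hμ]
  apply Finset.sum_congr rfl
  intro f _
  rw [lam_sum]

lemma ext0 {T : Tens m N} (h : ∀ f, lam f T = 0) : T = 0 := by
  rw [expand T]
  apply Finset.sum_eq_zero
  intro f _
  rw [h f, zero_smul]

lemma eq_of_lam {T T' : Tens m N} (h : ∀ f, lam f T = lam f T') : T = T' := by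
  rw [expand T, expand T']
  exact Finset.sum_congr rfl fun f _ => by rw [h f]

lemma rho_vb (A : Matrix (Fin m) (Fin m) ℂ) (f : FF m N) :
    rho A (vb f) = ∑ j, ∑ a, A a (f j) • vb (Function.update f j a) := by
  rw [rho, LinearMap.sum_apply]
  apply Finset.sum_congr rfl
  intro j _
  rw [vb, PiTensorProduct.map_tprod]
  have harg : (fun i => (Function.update (fun _ : Fin N => (LinearMap.id : Vm m →ₗ[ℂ] Vm m))
        j A.mulVecLin i) (Pi.single (f i) (1:ℂ)))
      = Function.update (fun i => Pi.single (f i) (1:ℂ)) j (A.mulVec (Pi.single (f j) 1)) := by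
    funext i
    by_cases hij : i = j
    · subst hij
      rw [Function.update_self, Function.update_self, Matrix.mulVecLin_apply]
    · rw [Function.update_of_ne hij, Function.update_of_ne hij]
      rfl
  rw [harg]
  have hexp : A.mulVec (Pi.single (f j) (1:ℂ)) = ∑ a, A a (f j) • (Pi.single a 1 : Vm m) := by
    rw [Matrix.mulVec_single]
    funext u
    rw [Finset.sum_apply]
    have h1 : ∀ a, (A a (f j) • (Pi.single a 1 : Vm m)) u = if u = a then A a (f j) else 0 := by
      intro a
      rw [Pi.smul_apply, Pi.single_apply, smul_eq_mul]
      split <;> simp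
    rw [Finset.sum_congr rfl fun a _ => h1 a, Finset.sum_ite_eq]
    simp
  rw [hexp, MultilinearMap.map_update_sum]
  apply Finset.sum_congr rfl
  intro a _
  rw [MultilinearMap.map_update_smul]
  congr 1
  rw [vb]
  congr 1
  funext i
  by_cases hij : i = j
  · subst hij
    rw [Function.update_self, Function.update_self]
  · rw [Function.update_of_ne hij, Function.update_of_ne hij]

lemma upd_iff {f g : FF m N} {j : Fin N} {a : Fin m} :
    Function.update f j a = g ↔ (a = g j ∧ Function.update g j (f j) = f) := by
  constructor
  · intro h
    constructor
    · rw [← h, Function.update_self]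
    · funext i
      by_cases hij : i = j
      · subst hij
        rw [Function.update_self]
      · rw [Function.update_of_ne hij, ← h, Function.update_of_ne hij]
  · rintro ⟨rfl, h2⟩
    funext i
    by_cases hij : i = j
    · subst hij
      rw [Function.update_self]
    · rw [Function.update_of_ne hij, ← h2, Function.update_of_ne hij]

lemma inner_sum (c : FF m N → ℂ) (A : Matrix (Fin m) (Fin m) ℂ) (g : FF m N) (j : Fin N) :
    (∑ f : FF m N, ∑ a : Fin m, c f * (A a (f j) * (if Function.update f j a = g then 1 else 0)))
      = ∑ w, A (g j) w * c (Function.update g j w) := by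
  have step1 : ∀ f : FF m N,
      (∑ a : Fin m, c f * (A a (f j) * (if Function.update f j a = g then 1 else 0)))
        = if Function.update g j (f j) = f then c f * A (g j) (f j) else 0 := by
    intro f
    have h1 : ∀ a : Fin m, c f * (A a (f j) * (if Function.update f j a = g then 1 else 0))
        = if a = g j then (if Function.update g j (f j) = f then c f * A (g j) (f j) else 0) else 0 := by
      intro a
      rw [if_congr (upd_iff (f := f) (g := g) (j := j) (a := a)) rfl rfl]
      by_cases h2 : a = g j
      · subst h2
        by_cases h3 : Function.update g j (f j) = f
        · simp [h3]
        · simp [h3]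
      · simp [h2]
    rw [Finset.sum_congr rfl fun a _ => h1 a, Finset.sum_ite_eq' univ (g j)]
    simp
  rw [Finset.sum_congr rfl fun f _ => step1 f, ← Finset.sum_filter]
  apply Finset.sum_nbij' (fun f => f j) (fun w => Function.update g j w)
  · intro f _
    exact mem_univ _
  · intro w _
    simp only [Finset.mem_filter, Finset.mem_univ, true_and]
    simp
  · intro f hf
    simp only [Finset.mem_filter, Finset.mem_univ, true_and] at hf
    exact hf
  · intro w _
    rw [Function.update_self]
  · intro f hf
    simp only [Finset.mem_filter, Finset.mem_univ, true_and] at hf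
    rw [hf]
    ring

lemma lam_rho (A : Matrix (Fin m) (Fin m) ℂ) (T : Tens m N) (g : FF m N) :
    lam g (rho A T) = ∑ j, ∑ w, A (g j) w * lam (Function.update g j w) T := by
  conv_lhs => rw [expand T]
  have h1 : rho A (∑ f, lam f T • vb f) = ∑ f, lam f T • rho A (vb f) := by
    rw [map_sum]
    exact Finset.sum_congr rfl fun f _ => LinearMap.map_smul _ _ _
  rw [h1, map_sum]
  have h2 : ∀ f, lam g (lam f T • rho A (vb f))
      = ∑ j, ∑ a, lam f T * (A a (f j) * (if Function.update f j a = g then 1 else 0)) := by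
    intro f
    rw [LinearMap.map_smul, rho_vb, map_sum, smul_eq_mul, Finset.mul_sum]
    apply Finset.sum_congr rfl
    intro j _
    rw [map_sum, Finset.mul_sum]
    apply Finset.sum_congr rfl
    intro a _
    rw [LinearMap.map_smul, lam_vb, smul_eq_mul]
  rw [Finset.sum_congr rfl fun f _ => h2 f, Finset.sum_comm]
  apply Finset.sum_congr rfl
  intro j _
  exact inner_sum (fun f => lam f T) A g j

lemma mem_inv_iff (T : Tens m N) :
    T ∈ InvSub m N ↔ ∀ A : Matrix (Fin m) (Fin m) ℂ, Aᵀ = -A →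
      ∀ g : FF m N, (∑ j, ∑ w, A (g j) w * lam (Function.update g j w) T) = 0 := by
  rw [InvSub]
  simp only [Submodule.mem_iInf, LinearMap.mem_ker]
  constructor
  · intro h A hA g
    rw [← lam_rho, h A hA, map_zero]
  · intro h A hA
    apply ext0
    intro g
    rw [lam_rho]
    exact h A hA g

def cT (T : Tens m N) : FF m N → ℂ := fun f => lam f T

lemma skewE (a b : Fin m) :
    (Matrix.single a b (1:ℂ) - Matrix.single b a 1)ᵀ
      = -(Matrix.single a b (1:ℂ) - Matrix.single b a 1) := by
  ext i j
  simp only [Matrix.transpose_apply, Matrix.sub_apply, Matrix.neg_apply,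
    Matrix.single, Matrix.of_apply]
  by_cases h1 : a = i <;> by_cases h2 : b = j <;> by_cases h3 : a = j <;> by_cases h4 : b = i <;>
    simp [h1, h2, h3, h4, and_comm] <;> ring_nf

lemma sum_stdBasis (c : FF m N → ℂ) (a b : Fin m) (g : FF m N) :
    (∑ j, ∑ w, (Matrix.single a b (1:ℂ) - Matrix.single b a 1 :
        Matrix (Fin m) (Fin m) ℂ) (g j) w * c (Function.update g j w))
    = (∑ j, if g j = a then c (Function.update g j b) else 0)
      - (∑ j, if g j = b then c (Function.update g j a) else 0) := by
  rw [← Finset.sum_sub_distrib]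
  apply Finset.sum_congr rfl
  intro j _
  have h1 : ∀ w, (Matrix.single a b (1:ℂ) - Matrix.single b a 1 :
        Matrix (Fin m) (Fin m) ℂ) (g j) w * c (Function.update g j w)
      = (if w = b then (if g j = a then c (Function.update g j b) else 0) else 0)
        - (if w = a then (if g j = b then c (Function.update g j a) else 0) else 0) := by
    intro w
    rw [Matrix.sub_apply, sub_mul]
    congr 1
    · simp only [Matrix.single, Matrix.of_apply]
      by_cases hw : w = b <;> by_cases hg : g j = a
      · rw [if_pos hw, if_pos hg, if_pos ⟨hg.symm, hw.symm⟩, hw, one_mul]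
      · rw [if_pos hw, if_neg hg, if_neg (fun hh => hg hh.1.symm), zero_mul]
      · rw [if_neg hw, if_neg (fun hh => hw hh.2.symm), zero_mul]
      · rw [if_neg hw, if_neg (fun hh => hw hh.2.symm), zero_mul]
    · simp only [Matrix.single, Matrix.of_apply]
      by_cases hw : w = a <;> by_cases hg : g j = b
      · rw [if_pos hw, if_pos hg, if_pos ⟨hg.symm, hw.symm⟩, hw, one_mul]
      · rw [if_pos hw, if_neg hg, if_neg (fun hh => hg hh.1.symm), zero_mul]
      · rw [if_neg hw, if_neg (fun hh => hw hh.2.symm), zero_mul]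
      · rw [if_neg hw, if_neg (fun hh => hw hh.2.symm), zero_mul]
  rw [Finset.sum_congr rfl fun w _ => h1 w, Finset.sum_sub_distrib,
    Finset.sum_ite_eq' univ b, Finset.sum_ite_eq' univ a]
  simp

lemma E_of_mem {T : Tens m N} (h : T ∈ InvSub m N) : IsE (cT T) := by
  intro a b g
  have h2 := (mem_inv_iff T).1 h _ (skewE a b) g
  rw [sum_stdBasis (fun f => lam f T) a b g] at h2
  exact sub_eq_zero.1 h2

lemma mem_of_E {T : Tens m N} (h : IsE (cT T)) : T ∈ InvSub m N := by
  rw [mem_inv_iff]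
  intro A hA g
  have hstep : (∑ a, ∑ w, A a w * (∑ j, if g j = a then lam (Function.update g j w) T else 0))
      = ∑ j, ∑ w, A (g j) w * lam (Function.update g j w) T := by
    calc (∑ a, ∑ w, A a w * (∑ j, if g j = a then lam (Function.update g j w) T else 0))
        = ∑ a, ∑ w, ∑ j, (if g j = a then A a w * lam (Function.update g j w) T else 0) := by
          apply Finset.sum_congr rfl
          intro a _
          apply Finset.sum_congr rfl
          intro w _
          rw [Finset.mul_sum]
          apply Finset.sum_congr rfl
          intro j _
          split <;> simp
      _ = ∑ j, ∑ a, ∑ w, (if g j = a then A a w * lam (Function.update g j w) T else 0) := by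
          rw [Finset.sum_congr rfl (fun a _ => Finset.sum_comm), Finset.sum_comm]
      _ = ∑ j, ∑ w, ∑ a, (if g j = a then A a w * lam (Function.update g j w) T else 0) :=
          Finset.sum_congr rfl (fun j _ => Finset.sum_comm)
      _ = ∑ j, ∑ w, A (g j) w * lam (Function.update g j w) T := by
          apply Finset.sum_congr rfl
          intro j _
          apply Finset.sum_congr rfl
          intro w _
          rw [Finset.sum_ite_eq univ (g j)]
          simp
  rw [← hstep]
  set S := ∑ a, ∑ w, A a w * (∑ j, if g j = a then lam (Function.update g j w) T else 0) with hSdef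
  have hsym : ∀ a w, (∑ j, if g j = w then lam (Function.update g j a) T else 0)
      = ∑ j, if g j = a then lam (Function.update g j w) T else 0 := by
    intro a w
    exact (h a w g).symm
  have hS : S = -S := by
    calc S = ∑ w, ∑ a, A a w * (∑ j, if g j = a then lam (Function.update g j w) T else 0) :=
          Finset.sum_comm
      _ = ∑ a, ∑ w, A w a * (∑ j, if g j = w then lam (Function.update g j a) T else 0) := rfl
      _ = ∑ a, ∑ w, (-(A a w)) * (∑ j, if g j = a then lam (Function.update g j w) T else 0) := by
          apply Finset.sum_congr rfl
          intro a _
          apply Finset.sum_congr rfl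
          intro w _
          have hAval : A w a = -(A a w) := by
            have := congrFun (congrFun hA a) w
            rw [Matrix.transpose_apply, Matrix.neg_apply] at this
            exact this
          rw [hAval, hsym a w]
      _ = -S := by
          rw [hSdef]
          rw [← Finset.sum_neg_distrib]
          apply Finset.sum_congr rfl
          intro a _
          rw [← Finset.sum_neg_distrib]
          apply Finset.sum_congr rfl
          intro w _
          ring
  have h2 : S + S = 0 := by
    nth_rewrite 2 [hS]
    exact add_neg_cancel S
  have := add_self_eq_zero.1 h2
  exact this



section Match
variable {r : ℕ}

def chi (σ : Equiv.Perm (Fin (2*r))) (f : FF m (2*r)) : ℂ :=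
  if ∀ i j, blk σ i = blk σ j → f i = f j then 1 else 0

def sec (σ : Equiv.Perm (Fin (2*r))) (k : Fin r) : Fin (2*r) :=
  σ ⟨2*(k:ℕ), by have := k.isLt; omega⟩

lemma blk_sec (σ : Equiv.Perm (Fin (2*r))) (k : Fin r) : blk σ (sec σ k) = k := by
  apply Fin.ext
  show ((σ.symm (sec σ k) : Fin (2*r)) : ℕ)/2 = (k:ℕ)
  rw [sec, Equiv.symm_apply_apply]
  show (2*(k:ℕ))/2 = (k:ℕ)
  omega

lemma matchTensor_eq (σ : Equiv.Perm (Fin (2*r))) :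
    matchTensor m r σ = ∑ g : Fin r → Fin m, vb (fun j => g (blk σ j)) := rfl

lemma lam_matchTensor (σ : Equiv.Perm (Fin (2*r))) (f : FF m (2*r)) :
    lam f (matchTensor m r σ) = chi σ f := by
  rw [matchTensor_eq, map_sum]
  have h1 : ∀ g : Fin r → Fin m, lam f (vb (fun j => g (blk σ j)))
      = if (fun j => g (blk σ j)) = f then 1 else 0 := fun g => lam_vb _ _
  rw [Finset.sum_congr rfl fun g _ => h1 g]
  by_cases hconst : ∀ i j, blk σ i = blk σ j → f i = f j
  · rw [chi, if_pos hconst, Finset.sum_eq_single (fun k => f (sec σ k))]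
    · rw [if_pos]
      funext j
      exact hconst (sec σ (blk σ j)) j (blk_sec σ (blk σ j))
    · intro g _ hgne
      rw [if_neg]
      intro hg
      apply hgne
      funext k
      have h2 : g (blk σ (sec σ k)) = f (sec σ k) := congrFun hg (sec σ k)
      rwa [blk_sec] at h2
    · intro h
      exact absurd (mem_univ _) h
  · rw [chi, if_neg hconst]
    apply Finset.sum_eq_zero
    intro g _
    rw [if_neg]
    intro hg
    apply hconst
    intro i j hij
    rw [← congrFun hg i, ← congrFun hg j]
    show g (blk σ i) = g (blk σ j)
    rw [hij]

lemma lemX (σ : Equiv.Perm (Fin (2*r))) {a b : Fin m} (hab : a ≠ b) {g : FF m (2*r)}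
    {j : Fin (2*r)} (h1 : g j = a)
    (h2 : ∀ p q, blk σ p = blk σ q → Function.update g j b p = Function.update g j b q) :
    g (iot σ j) = b ∧
      ∀ p q, blk σ p = blk σ q →
        Function.update g (iot σ j) a p = Function.update g (iot σ j) a q := by
  have hne : iot σ j ≠ j := iot_ne σ j
  have hgb : g (iot σ j) = b := by
    have h3 := h2 (iot σ j) j (blk_iot σ j)
    rwa [Function.update_of_ne hne, Function.update_self] at h3
  refine ⟨hgb, ?_⟩
  intro p q hpq
  by_cases hpj : blk σ p = blk σ j
  · have hqj : blk σ q = blk σ j := hpq.symm.trans hpj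
    have hval : ∀ x, blk σ x = blk σ j → Function.update g (iot σ j) a x = a := by
      intro x hx
      rcases (blk_eq_iff σ x j).1 hx with rfl | rfl
      · rw [Function.update_of_ne hne.symm]
        exact h1
      · rw [Function.update_self]
    rw [hval p hpj, hval q hqj]
  · have hqj : ¬ blk σ q = blk σ j := fun h => hpj (hpq.trans h)
    have hpij : p ≠ iot σ j := fun h => hpj (by rw [h]; exact blk_iot σ j)
    have hqij : q ≠ iot σ j := fun h => hqj (by rw [h]; exact blk_iot σ j)
    have hpj' : p ≠ j := fun h => hpj (by rw [h])
    have hqj' : q ≠ j := fun h => hqj (by rw [h])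
    rw [Function.update_of_ne hpij, Function.update_of_ne hqij]
    have h3 := h2 p q hpq
    rwa [Function.update_of_ne hpj', Function.update_of_ne hqj'] at h3

lemma chiE (σ : Equiv.Perm (Fin (2*r))) : IsE (chi (m := m) σ) := by
  intro a b g
  by_cases hab : a = b
  · subst hab
    rfl
  have hinv : Function.Involutive (iot σ) := iot_iot σ
  have hre : (∑ j, if g j = b then chi σ (Function.update g j a) else 0)
      = ∑ j, if g (iot σ j) = b then chi σ (Function.update g (iot σ j) a) else 0 :=
    (Equiv.sum_comp hinv.toPerm
      (fun j => if g j = b then chi σ (Function.update g j a) else 0)).symm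
  rw [hre]
  apply Finset.sum_congr rfl
  intro j _
  by_cases hL : g j = a ∧ ∀ p q, blk σ p = blk σ q →
      Function.update g j b p = Function.update g j b q
  · obtain ⟨hL1, hL2⟩ := hL
    have hX := lemX σ hab hL1 hL2
    rw [if_pos hL1, if_pos hX.1, chi, if_pos hL2, chi, if_pos hX.2]
  · by_cases hR : g (iot σ j) = b ∧ ∀ p q, blk σ p = blk σ q →
        Function.update g (iot σ j) a p = Function.update g (iot σ j) a q
    · exfalso
      apply hL
      obtain ⟨hR1, hR2⟩ := hR
      have hX := lemX σ (Ne.symm hab) hR1 hR2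
      rw [iot_iot] at hX
      exact ⟨hX.1, hX.2⟩
    · have hLval : (if g j = a then chi σ (Function.update g j b) else 0) = 0 := by
        rcases not_and_or.1 hL with h1 | h2
        · rw [if_neg h1]
        · by_cases h3 : g j = a
          · rw [if_pos h3, chi, if_neg h2]
          · rw [if_neg h3]
      have hRval : (if g (iot σ j) = b then chi σ (Function.update g (iot σ j) a) else 0) = 0 := by
        rcases not_and_or.1 hR with h1 | h2
        · rw [if_neg h1]
        · by_cases h3 : g (iot σ j) = b
          · rw [if_pos h3, chi, if_neg h2]
          · rw [if_neg h3]
      rw [hLval, hRval]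

lemma matchTensor_mem (σ : Equiv.Perm (Fin (2*r))) :
    matchTensor m r σ ∈ InvSub m (2*r) := by
  apply mem_of_E
  have h : cT (matchTensor m r σ) = chi σ := funext fun f => lam_matchTensor σ f
  rw [h]
  exact chiE σ

lemma chi_ell_self (h : r ≤ m) (σ : Equiv.Perm (Fin (2*r))) : chi σ (ell h σ) = 1 := by
  rw [chi, if_pos]
  intro i j hij
  exact congrArg (Fin.castLE h) hij

lemma rel_of_chi_ell (h : r ≤ m) {σ σ' : Equiv.Perm (Fin (2*r))}
    (hc : chi σ' (ell h σ) ≠ 0) : ∀ i j, blk σ' i = blk σ' j ↔ blk σ i = blk σ j := by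
  rw [chi] at hc
  have hconst : ∀ i j, blk σ' i = blk σ' j → blk σ i = blk σ j := by
    intro i j hij
    by_cases hcc : ∀ p q, blk σ' p = blk σ' q → ell h σ p = ell h σ q
    · exact (ell_eq_iff h σ i j).1 (hcc i j hij)
    · exfalso
      apply hc
      rw [if_neg hcc]
  intro i j
  refine ⟨hconst i j, ?_⟩
  intro hij
  rcases (blk_eq_iff σ i j).1 hij with rfl | rfl
  · rfl
  · have h1 : blk σ' (iot σ' j) = blk σ' j := blk_iot σ' j
    have h2 : blk σ (iot σ' j) = blk σ j := hconst _ _ h1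
    rcases (blk_eq_iff σ (iot σ' j) j).1 h2 with h3 | h3
    · exact absurd h3 (iot_ne σ' j)
    · rw [← h3]
      exact blk_iot σ' j

lemma chi_eq_of_rel {σ σ' : Equiv.Perm (Fin (2*r))}
    (h : ∀ i j, blk σ' i = blk σ' j ↔ blk σ i = blk σ j) : chi (m := m) σ' = chi σ := by
  funext f
  rw [chi, chi]
  apply if_congr _ rfl rfl
  constructor
  · intro hc i j hij
    exact hc i j ((h i j).2 hij)
  · intro hc i j hij
    exact hc i j ((h i j).1 hij)

lemma matchTensor_eq_of_chi {σ σ' : Equiv.Perm (Fin (2*r))} (h : chi (m := m) σ' = chi σ) :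
    matchTensor m r σ' = matchTensor m r σ :=
  eq_of_lam fun f => by rw [lam_matchTensor, lam_matchTensor, h]

lemma chi_eq_of_matchTensor {σ σ' : Equiv.Perm (Fin (2*r))}
    (h : matchTensor m r σ' = matchTensor m r σ) : chi (m := m) σ' = chi σ :=
  funext fun f => by rw [← lam_matchTensor, ← lam_matchTensor, h]

lemma chi_ell_cases (h : r ≤ m) (σ σ' : Equiv.Perm (Fin (2*r))) :
    chi σ' (ell h σ) = 0 ∨ (chi σ' (ell h σ) = 1 ∧ matchTensor m r σ' = matchTensor m r σ) := by
  by_cases hc : chi σ' (ell h σ) = 0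
  · left
    exact hc
  · right
    have hrel := rel_of_chi_ell h hc
    have hchieq := chi_eq_of_rel (m := m) hrel
    refine ⟨?_, matchTensor_eq_of_chi hchieq⟩
    rw [hchieq]
    exact chi_ell_self h σ

lemma rel_of_chi_eq (h : r ≤ m) {σ σ' : Equiv.Perm (Fin (2*r))} (hchi : chi (m := m) σ' = chi σ) :
    ∀ i j, blk σ' i = blk σ' j ↔ blk σ i = blk σ j := by
  apply rel_of_chi_ell h (σ := σ)
  rw [hchi, chi_ell_self h σ]
  exact one_ne_zero

end Match
end SFTaux

/-- First and second fundamental theorems of invariant theory for `so(m)` acting on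
`V^{⊗N}` in the stable range `N < m`: there are no invariants if `N` is odd, and if
`N = 2r` the invariants are spanned by the permutations of `ω^{⊗r}`; moreover these
spanning tensors are linearly independent (as a set) when `m ≥ N`. -/
theorem stmt14 (m N : ℕ) (hNm : N < m) :
    (Odd N → InvSub m N = ⊥) ∧
    (∀ r : ℕ, N = 2 * r →
      InvSub m (2 * r) =
        Submodule.span ℂ {x : Tens m (2 * r) |
          ∃ σ : Equiv.Perm (Fin (2 * r)), x = matchTensor m r σ} ∧
      LinearIndependent ℂ
        (fun x : {x : Tens m (2 * r) // ∃ σ : Equiv.Perm (Fin (2 * r)),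
            x = matchTensor m r σ} => (x : Tens m (2 * r)))) := by
  classical
  constructor
  · -- odd case
    intro hodd
    rw [eq_bot_iff]
    intro T hT
    have hE : SFTaux.IsE (SFTaux.cT T) := SFTaux.E_of_mem hT
    have hz := SFTaux.zero_of_oddN hNm hodd hE
    have hT0 : T = 0 := SFTaux.ext0 (fun f => hz f)
    simpa using hT0
  · intro r hr
    subst hr
    have hrm : r ≤ m := by omega
    haveI : FiniteDimensional ℂ (Tens m (2 * r)) := SFTaux.fdTens
    -- linear independence
    have hind : LinearIndependent ℂ
        (fun x : {x : Tens m (2 * r) // ∃ σ : Equiv.Perm (Fin (2 * r)),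
            x = matchTensor m r σ} => (x : Tens m (2 * r))) := by
      rw [linearIndependent_iff']
      intro s gcoef hsum x hx
      have hxval : (x : Tens m (2 * r)) = matchTensor m r x.2.choose := x.2.choose_spec
      have happ := congrArg (SFTaux.lam (SFTaux.ell hrm x.2.choose)) hsum
      rw [map_sum, map_zero] at happ
      have hterm : ∀ y ∈ s, SFTaux.lam (SFTaux.ell hrm x.2.choose)
            (gcoef y • (y : Tens m (2 * r)))
          = if y = x then gcoef x else 0 := by
        intro y _
        rw [LinearMap.map_smul, smul_eq_mul]
        have hyval : (y : Tens m (2 * r)) = matchTensor m r y.2.choose := y.2.choose_spec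
        rw [hyval, SFTaux.lam_matchTensor]
        rcases SFTaux.chi_ell_cases hrm x.2.choose y.2.choose with h0 | ⟨h1, heq⟩
        · rw [h0, mul_zero, if_neg]
          intro hyx
          rw [hyx] at h0
          exact one_ne_zero ((SFTaux.chi_ell_self hrm x.2.choose).symm.trans h0)
        · rw [h1, mul_one]
          have hval : (y : Tens m (2 * r)) = (x : Tens m (2 * r)) := by
            rw [hyval, hxval, heq]
          have hxy : y = x := Subtype.ext hval
          rw [if_pos hxy, hxy]
      rw [Finset.sum_congr rfl hterm, Finset.sum_ite_eq' s x, if_pos hx] at happ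
      exact happ
    refine ⟨?_, hind⟩
    -- span equality
    set S : Set (Tens m (2 * r)) := {x : Tens m (2 * r) |
      ∃ σ : Equiv.Perm (Fin (2 * r)), x = matchTensor m r σ} with hSdef
    have hSfin : S.Finite := by
      have h1 : S = Set.range (fun σ : Equiv.Perm (Fin (2 * r)) => matchTensor m r σ) := by
        ext x
        simp only [hSdef, Set.mem_setOf_eq, Set.mem_range]
        exact ⟨fun ⟨σ, h⟩ => ⟨σ, h.symm⟩, fun ⟨σ, h⟩ => ⟨σ, h.symm⟩⟩
      rw [h1]
      exact Set.finite_range _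
    haveI hftS : Fintype S := hSfin.fintype
    have hspan_le : Submodule.span ℂ S ≤ InvSub m (2 * r) := by
      rw [Submodule.span_le]
      rintro x ⟨σ, rfl⟩
      exact SFTaux.matchTensor_mem σ
    -- the choice function
    have hmem : ∀ x : S, ∃ σ : Equiv.Perm (Fin (2 * r)),
        (x : Tens m (2 * r)) = matchTensor m r σ := fun x => x.2
    -- injective linear map from invariants to functions on S
    set Φ : InvSub m (2 * r) →ₗ[ℂ] (S → ℂ) :=
      LinearMap.pi (fun x : S => (SFTaux.lam (SFTaux.ell hrm (hmem x).choose)).comp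
        (Submodule.subtype _)) with hΦdef
    have hΦinj : Function.Injective Φ := by
      rw [injective_iff_map_eq_zero]
      intro T hT0
      have hcE : SFTaux.IsE (SFTaux.cT (T : Tens m (2 * r))) := SFTaux.E_of_mem T.2
      have hzero : ∀ σ : Equiv.Perm (Fin (2 * r)),
          SFTaux.cT (T : Tens m (2 * r)) (SFTaux.ell hrm σ) = 0 := by
        intro σ
        set x : S := ⟨matchTensor m r σ, ⟨σ, rfl⟩⟩ with hxdef
        have h1 : SFTaux.lam (SFTaux.ell hrm (hmem x).choose) (T : Tens m (2 * r)) = 0 :=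
          congrFun hT0 x
        have h2 : matchTensor m r (hmem x).choose = matchTensor m r σ :=
          ((hmem x).choose_spec).symm
        have h3 := SFTaux.chi_eq_of_matchTensor h2
        have hrel := SFTaux.rel_of_chi_eq hrm h3
        have hlev : ∀ i j, SFTaux.ell hrm σ i = SFTaux.ell hrm σ j
            ↔ SFTaux.ell hrm (hmem x).choose i = SFTaux.ell hrm (hmem x).choose j := by
          intro i j
          rw [SFTaux.ell_eq_iff, SFTaux.ell_eq_iff]
          exact (hrel i j).symm
        have h4 := SFTaux.claimR hNm hcE _ (SFTaux.ell hrm σ)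
          (SFTaux.ell hrm (hmem x).choose) (SFTaux.hall_ell hrm σ) hlev rfl
        rw [SFTaux.cT] at h4 ⊢
        rw [h4]
        exact h1
      have hTz : (T : Tens m (2 * r)) = 0 :=
        SFTaux.ext0 (SFTaux.lemL hNm hcE hzero)
      exact Subtype.ext hTz
    have hrank1 : Module.finrank ℂ (InvSub m (2 * r)) ≤ Fintype.card S := by
      have h1 := LinearMap.finrank_le_finrank_of_injective hΦinj
      rwa [Module.finrank_fintype_fun_eq_card] at h1
    have hrank2 : Module.finrank ℂ (Submodule.span ℂ S) = S.toFinset.card :=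
      finrank_span_set_eq_card hind
    have hle : Module.finrank ℂ (InvSub m (2 * r)) ≤ Module.finrank ℂ (Submodule.span ℂ S) := by
      rw [hrank2, Set.toFinset_card]
      exact hrank1
    exact (Submodule.eq_of_le_of_finrank_le hspan_le hle).symm
end
end

section
/- Let V be a finite-dimensional vector space with nondegenerate symmetric bilinear form, and m ≥ 0 such that dim V large relative to N. Then for any subrepresentations 0 ≠ τ_1 ⊊ τ_2 ⊆ V^{⊗N} of so(V) (or osp in the graded case), the inclusion τ_1 ↪ τ_2 splits, provided V^{⊗2N} is a completely reducible so(V)-module. In particular, complete reducibility of V^{⊗2N} implies splitting of all inclusions of subrepresentations of V^{⊗N}. -/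
open scoped TensorProduct

noncomputable section

/-- The diagonal (derivation) action of an endomorphism on `V^{⊗N}`. -/
def rho2 {V : Type*} [AddCommGroup V] [Module ℂ V] {N : ℕ} (f : Module.End ℂ V) :
    (⨂[ℂ] _i : Fin N, V) →ₗ[ℂ] ⨂[ℂ] _i : Fin N, V :=
  ∑ j : Fin N, PiTensorProduct.map
    (Function.update (fun _ : Fin N => (LinearMap.id : V →ₗ[ℂ] V)) j f)

/-- Skew-adjointness w.r.t. a bilinear form: membership in `so(V)`. -/
def IsSkew {V : Type*} [AddCommGroup V] [Module ℂ V]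
    (B : V →ₗ[ℂ] V →ₗ[ℂ] ℂ) (f : Module.End ℂ V) : Prop :=
  ∀ v w, B (f v) w = -B v (f w)

/-- A submodule of `V^{⊗N}` is a subrepresentation iff it is invariant under the diagonal
action of `so(V)`. -/
def IsInvt {V : Type*} [AddCommGroup V] [Module ℂ V]
    (B : V →ₗ[ℂ] V →ₗ[ℂ] ℂ) {N : ℕ}
    (τ : Submodule ℂ (⨂[ℂ] _i : Fin N, V)) : Prop :=
  ∀ f : Module.End ℂ V, IsSkew B f → ∀ x ∈ τ, rho2 f x ∈ τ

namespace Stmt15Aux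

open PiTensorProduct

variable {V : Type*} [AddCommGroup V] [Module ℂ V]

lemma rho2_tprod {N : ℕ} (f : Module.End ℂ V) (v : Fin N → V) :
    rho2 f (tprod ℂ v) = ∑ j, tprod ℂ (Function.update v j (f (v j))) := by
  simp only [rho2, LinearMap.sum_apply, PiTensorProduct.map_tprod]
  refine Finset.sum_congr rfl fun j _ => ?_
  congr 1; funext i
  rcases eq_or_ne i j with rfl | h
  · simp
  · simp [Function.update_of_ne h]

/-- Finite-dimensionality of tensor powers. -/
lemma fd (V : Type*) [AddCommGroup V] [Module ℂ V] [FiniteDimensional ℂ V] (n : ℕ) :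
    FiniteDimensional ℂ (⨂[ℂ] _i : Fin n, V) := by
  induction n with
  | zero => exact (PiTensorProduct.isEmptyEquiv (Fin 0)).symm.finiteDimensional
  | succ n ih =>
    have e1 : (⨂[ℂ] _i : Fin (n + 1), V) ≃ₗ[ℂ] ⨂[ℂ] _i : (Fin 1 ⊕ Fin n), V :=
      PiTensorProduct.reindex ℂ (fun _ => V) ((finSumFinEquiv.trans (finCongr (by omega)))).symm
    have e2 : (⨂[ℂ] _i : (Fin 1 ⊕ Fin n), V) ≃ₗ[ℂ]
        (⨂[ℂ] _i : Fin 1, V) ⊗[ℂ] (⨂[ℂ] _i : Fin n, V) := (PiTensorProduct.tmulEquiv ℂ V).symm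
    have e3 : (⨂[ℂ] _i : Fin 1, V) ≃ₗ[ℂ] V := PiTensorProduct.subsingletonEquiv 0
    haveI := ih
    exact ((e1.trans e2).trans
      (TensorProduct.congr e3 (LinearEquiv.refl ℂ _))).symm.finiteDimensional

variable (B : V →ₗ[ℂ] V →ₗ[ℂ] ℂ)

/-- The induced pairing on the `n`-th tensor power. -/
def BN (n : ℕ) : (⨂[ℂ] _i : Fin n, V) →ₗ[ℂ] (⨂[ℂ] _i : Fin n, V) →ₗ[ℂ] ℂ :=
  (PiTensorProduct.map₂ (fun _ : Fin n => B)).compr₂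
    (PiTensorProduct.lift (MultilinearMap.mkPiAlgebra ℂ (Fin n) ℂ))

@[simp] lemma BN_tprod (n : ℕ) (v w : Fin n → V) :
    BN B n (tprod ℂ v) (tprod ℂ w) = ∏ i, B (v i) (w i) := by
  simp [BN, PiTensorProduct.map₂_tprod_tprod]

lemma prod_update_left {n : ℕ} (v w : Fin n → V) (j : Fin n) (x : V) :
    (∏ i, B (Function.update v j x i) (w i))
      = B x (w j) * ∏ i ∈ Finset.univ.erase j, B (v i) (w i) := by
  have h : (fun i => B (Function.update v j x i) (w i))
      = Function.update (fun i => B (v i) (w i)) j (B x (w j)) := by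
    funext i
    rcases eq_or_ne i j with rfl | h
    · simp
    · simp [Function.update_of_ne h]
  rw [h, Finset.prod_update_of_mem (f := fun i => B (v i) (w i)) (Finset.mem_univ j)]
  congr 1
  rw [Finset.erase_eq]

lemma prod_update_right {n : ℕ} (v w : Fin n → V) (j : Fin n) (x : V) :
    (∏ i, B (v i) (Function.update w j x i))
      = B (v j) x * ∏ i ∈ Finset.univ.erase j, B (v i) (w i) := by
  have h : (fun i => B (v i) (Function.update w j x i))
      = Function.update (fun i => B (v i) (w i)) j (B (v j) x) := by
    funext i
    rcases eq_or_ne i j with rfl | h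
    · simp
    · simp [Function.update_of_ne h]
  rw [h, Finset.prod_update_of_mem (f := fun i => B (v i) (w i)) (Finset.mem_univ j)]
  congr 1
  rw [Finset.erase_eq]

lemma BN_skew {n : ℕ} {f : Module.End ℂ V} (hf : IsSkew B f)
    (x y : ⨂[ℂ] _i : Fin n, V) :
    BN B n (rho2 f x) y = - BN B n x (rho2 f y) := by
  have h : (BN B n).comp (rho2 f)
      = -(LinearMap.lcomp ℂ ℂ (rho2 f) ∘ₗ BN B n) := by
    ext v w
    simp only [LinearMap.compMultilinearMap_apply, LinearMap.comp_apply, LinearMap.neg_apply,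
      LinearMap.lcomp_apply, rho2_tprod, map_sum, LinearMap.sum_apply, BN_tprod]
    rw [← Finset.sum_neg_distrib]
    refine Finset.sum_congr rfl fun j _ => ?_
    rw [prod_update_left, prod_update_right, hf, neg_mul]
  have := LinearMap.congr_fun (LinearMap.congr_fun h x) y
  simpa using this

lemma BN_nondeg [FiniteDimensional ℂ V] (hB : LinearMap.BilinForm.Nondegenerate B) (n : ℕ) :
    LinearMap.BilinForm.Nondegenerate (BN B n) := by
  classical
  haveI := fd V n
  refine LinearMap.BilinForm.Nondegenerate.ofSeparatingLeft ?_
  intro x hx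
  set d := Module.finrank ℂ V
  set b : Module.Basis (Fin d) ℂ V := Module.finBasis ℂ V
  set b' : Module.Basis (Fin d) ℂ V := LinearMap.BilinForm.dualBasis B hB b
  set T : (Fin n → Fin d) → (⨂[ℂ] _i : Fin n, V) := fun k => tprod ℂ (fun i => b (k i)) with hT
  set T' : (Fin n → Fin d) → (⨂[ℂ] _i : Fin n, V) := fun k => tprod ℂ (fun i => b' (k i)) with hT'
  have hspan : x ∈ Submodule.span ℂ (Set.range T') := by
    have htop : Submodule.span ℂ (Set.range T') = ⊤ := by
      rw [eq_top_iff, ← PiTensorProduct.span_tprod_eq_top (R := ℂ) (s := fun _ : Fin n => V)]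
      rw [Submodule.span_le]
      rintro _ ⟨v, rfl⟩
      have hv : (tprod ℂ (s := fun _ : Fin n => V)) v
          = tprod ℂ (fun i => ∑ j, b'.repr (v i) j • b' j) := by
        congr 1; funext i; exact (b'.sum_repr (v i)).symm
      rw [hv, MultilinearMap.map_sum]
      refine Submodule.sum_mem _ fun k _ => ?_
      have : (tprod ℂ (s := fun _ : Fin n => V)) (fun i => b'.repr (v i) (k i) • b' (k i))
          = (∏ i, b'.repr (v i) (k i)) • T' k := MultilinearMap.map_smul_univ _ _ _
      rw [this]
      exact Submodule.smul_mem _ _ (Submodule.subset_span ⟨k, rfl⟩)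
    rw [htop]; trivial
  rw [Submodule.mem_span_range_iff_exists_fun] at hspan
  obtain ⟨c, hc⟩ := hspan
  have hTT : ∀ k l, BN B n (T' k) (T l) = if l = k then 1 else 0 := by
    intro k l
    rw [hT, hT', BN_tprod]
    have : ∀ i, B (b' (k i)) (b (l i)) = if l i = k i then 1 else 0 := fun i =>
      LinearMap.BilinForm.apply_dualBasis_left (B := B) hB b (k i) (l i)
    simp only [this, Finset.prod_boole]
    congr 1
    simp [funext_iff]
  have hcl : ∀ l, c l = 0 := by
    intro l
    have h0 := hx (T l)
    rw [← hc] at h0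
    simpa [hTT, Finset.sum_ite_eq] using h0
  rw [← hc]
  simp [hcl]

def kap (n : ℕ) : (Fin n ⊕ Fin n) ≃ Fin (2 * n) := finSumFinEquiv.trans (finCongr (two_mul n).symm)

def eTensor (n : ℕ) : (⨂[ℂ] _i : Fin (2 * n), V) ≃ₗ[ℂ]
    (⨂[ℂ] _i : Fin n, V) ⊗[ℂ] (⨂[ℂ] _i : Fin n, V) :=
  (PiTensorProduct.reindex ℂ (fun _ => V) (kap n).symm).trans (PiTensorProduct.tmulEquiv ℂ V).symm

/-- The `so(V)`-equivariant identification of `V^{⊗2N}` with `End(V^{⊗N})`. -/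
def eEnd [FiniteDimensional ℂ V] (hB : LinearMap.BilinForm.Nondegenerate B) (n : ℕ) :
    (⨂[ℂ] _i : Fin (2 * n), V) ≃ₗ[ℂ]
      ((⨂[ℂ] _i : Fin n, V) →ₗ[ℂ] (⨂[ℂ] _i : Fin n, V)) :=
  letI := fd V n
  (eTensor n).trans ((TensorProduct.congr (LinearMap.BilinForm.toDual (BN B n) (BN_nondeg B hB n))
    (LinearEquiv.refl ℂ _)).trans (dualTensorHomEquiv ℂ _ _))

lemma eEnd_tprod [FiniteDimensional ℂ V] (hB : LinearMap.BilinForm.Nondegenerate B) (n : ℕ)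
    (v : Fin (2 * n) → V) :
    eEnd B hB n (tprod ℂ v)
      = (BN B n (tprod ℂ fun i => v (kap n (Sum.inl i)))).smulRight
          (tprod ℂ fun i => v (kap n (Sum.inr i))) := by
  letI := fd V n
  have h1 : eTensor (V := V) n (tprod ℂ v)
      = (tprod ℂ fun i => v (kap n (Sum.inl i))) ⊗ₜ[ℂ]
          (tprod ℂ fun i => v (kap n (Sum.inr i))) := by
    simp only [eTensor, LinearEquiv.trans_apply, PiTensorProduct.reindex_tprod, Equiv.symm_symm]
    exact PiTensorProduct.tmulEquiv_symm_apply (R := ℂ) (M := V) fun i => v (kap n i)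
  simp only [eEnd, LinearEquiv.trans_apply, h1, TensorProduct.congr_tmul, LinearEquiv.refl_apply]
  ext x
  simp [dualTensorHomEquiv, LinearMap.BilinForm.toDual_def]

lemma eEnd_rho2 [FiniteDimensional ℂ V] (hB : LinearMap.BilinForm.Nondegenerate B) (n : ℕ)
    (f : Module.End ℂ V) (hf : IsSkew B f) (t : ⨂[ℂ] _i : Fin (2 * n), V) :
    eEnd B hB n (rho2 f t) = rho2 f ∘ₗ eEnd B hB n t - eEnd B hB n t ∘ₗ rho2 f := by
  induction t using PiTensorProduct.induction_on with
  | add x y hx hy =>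
    simp only [map_add, hx, hy, LinearMap.add_comp, LinearMap.comp_add]
    abel
  | smul_tprod r v =>
    have core : eEnd B hB n (rho2 f (tprod ℂ v))
        = rho2 f ∘ₗ eEnd B hB n (tprod ℂ v) - eEnd B hB n (tprod ℂ v) ∘ₗ rho2 f := by
      classical
      set vL : Fin n → V := fun i => v (kap n (Sum.inl i)) with hvL
      set vR : Fin n → V := fun i => v (kap n (Sum.inr i)) with hvR
      have hinj := (kap n).injective
      have e1 : ∀ (i : Fin n) (x : V),
          (fun i' => Function.update v (kap n (Sum.inl i)) x (kap n (Sum.inl i')))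
            = Function.update vL i x := by
        intro i x; funext i'
        rcases eq_or_ne i' i with rfl | h
        · simp
        · rw [Function.update_of_ne (fun hc => h (Sum.inl_injective (hinj hc))),
            Function.update_of_ne h]
      have e2 : ∀ (i : Fin n) (x : V),
          (fun i' => Function.update v (kap n (Sum.inl i)) x (kap n (Sum.inr i'))) = vR := by
        intro i x; funext i'
        rw [Function.update_of_ne (fun hc : kap n (Sum.inr i') = kap n (Sum.inl i) =>
          Sum.inr_ne_inl (hinj hc))]
      have e3 : ∀ (i : Fin n) (x : V),
          (fun i' => Function.update v (kap n (Sum.inr i)) x (kap n (Sum.inl i'))) = vL := by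
        intro i x; funext i'
        rw [Function.update_of_ne (fun hc : kap n (Sum.inl i') = kap n (Sum.inr i) =>
          Sum.inl_ne_inr (hinj hc))]
      have e4 : ∀ (i : Fin n) (x : V),
          (fun i' => Function.update v (kap n (Sum.inr i)) x (kap n (Sum.inr i')))
            = Function.update vR i x := by
        intro i x; funext i'
        rcases eq_or_ne i' i with rfl | h
        · simp
        · rw [Function.update_of_ne (fun hc => h (Sum.inr_injective (hinj hc))),
            Function.update_of_ne h]
      have hsum1 : ∀ (as : Fin n → (⨂[ℂ] _i : Fin n, V)) (b : ⨂[ℂ] _i : Fin n, V),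
          (∑ i, (BN B n (as i)).smulRight b) = (BN B n (∑ i, as i)).smulRight b := by
        intro as b; ext x
        simp [LinearMap.sum_apply, Finset.sum_smul]
      have hsum2 : ∀ (a : ⨂[ℂ] _i : Fin n, V) (bs : Fin n → (⨂[ℂ] _i : Fin n, V)),
          (∑ i, (BN B n a).smulRight (bs i)) = (BN B n a).smulRight (∑ i, bs i) := by
        intro a bs; ext x
        simp [LinearMap.sum_apply, Finset.smul_sum]
      rw [rho2_tprod, map_sum, ← Equiv.sum_comp (kap n)
        (fun j => eEnd B hB n (tprod ℂ (Function.update v j (f (v j))))), Fintype.sum_sum_type]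
      simp only [eEnd_tprod, e1, e2, e3, e4]
      rw [hsum1, hsum2, ← rho2_tprod, ← rho2_tprod]
      simp only [← hvL, ← hvR]
      set a : ⨂[ℂ] _i : Fin n, V := tprod ℂ vL
      set b : ⨂[ℂ] _i : Fin n, V := tprod ℂ vR
      have h5 : rho2 f ∘ₗ (BN B n a).smulRight b = (BN B n a).smulRight (rho2 f b) := by
        ext x; simp
      have h6 : (BN B n a).smulRight b ∘ₗ rho2 f = ((BN B n a) ∘ₗ rho2 f).smulRight b := by
        ext x; simp
      have h7 : (BN B n a) ∘ₗ rho2 f = -(BN B n (rho2 f a)) := by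
        refine LinearMap.ext fun y => ?_
        simp [BN_skew B hf a y]
      have h8 : ((-(BN B n (rho2 f a))).smulRight b) = -((BN B n (rho2 f a)).smulRight b) := by
        ext x; simp
      rw [h5, h6, h7, h8, sub_neg_eq_add]
      abel
    rw [map_smul, map_smul, core]
    simp only [map_smul, LinearMap.smul_comp, LinearMap.comp_smul, smul_sub]

end Stmt15Aux

/-- If `V^{⊗2N}` is a completely reducible `so(V)`-module, then every inclusion
`0 ≠ τ₁ ⊊ τ₂ ⊆ V^{⊗N}` of subrepresentations splits: there is an `so(V)`-equivariant
projection `τ₂ → τ₁` restricting to the identity on `τ₁`. -/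
theorem stmt15 {V : Type*} [AddCommGroup V] [Module ℂ V] [FiniteDimensional ℂ V]
    (B : V →ₗ[ℂ] V →ₗ[ℂ] ℂ) (hsymm : ∀ v w, B v w = B w v)
    (hnondeg : ∀ v, (∀ w, B v w = 0) → v = 0) (N : ℕ)
    (hcr : ∀ S : Submodule ℂ (⨂[ℂ] _i : Fin (2 * N), V), IsInvt B S →
      ∃ S' : Submodule ℂ (⨂[ℂ] _i : Fin (2 * N), V),
        IsInvt B S' ∧ S ⊓ S' = ⊥ ∧ S ⊔ S' = ⊤)
    (τ1 τ2 : Submodule ℂ (⨂[ℂ] _i : Fin N, V))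
    (h1 : IsInvt B τ1) (h2 : IsInvt B τ2)
    (h12 : τ1 ≤ τ2) (hne0 : τ1 ≠ ⊥) (hne : τ1 ≠ τ2) :
    ∃ π : τ2 →ₗ[ℂ] (⨂[ℂ] _i : Fin N, V),
      LinearMap.range π ≤ τ1 ∧
      (∀ (x : ⨂[ℂ] _i : Fin N, V) (hx : x ∈ τ1), π ⟨x, h12 hx⟩ = x) ∧
      (∀ (f : Module.End ℂ V) (hf : IsSkew B f) (x : τ2),
        π ⟨rho2 f x.1, h2 f hf x.1 x.2⟩ = rho2 f (π x)) := by
  classical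
  have hB : LinearMap.BilinForm.Nondegenerate B :=
    LinearMap.BilinForm.Nondegenerate.ofSeparatingLeft hnondeg
  set e := Stmt15Aux.eEnd B hB N with he
  -- the submodule of endomorphisms mapping τ2 into τ1 and vanishing on τ1
  set A0 : Submodule ℂ ((⨂[ℂ] _i : Fin N, V) →ₗ[ℂ] (⨂[ℂ] _i : Fin N, V)) :=
    { carrier := {φ | (∀ x ∈ τ2, φ x ∈ τ1) ∧ ∀ x ∈ τ1, φ x = 0}
      add_mem' := by
        rintro φ ψ ⟨hφ1, hφ2⟩ ⟨hψ1, hψ2⟩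
        exact ⟨fun x hx => Submodule.add_mem _ (hφ1 x hx) (hψ1 x hx),
          fun x hx => by simp [hφ2 x hx, hψ2 x hx]⟩
      zero_mem' := ⟨fun x _ => Submodule.zero_mem _, fun x _ => rfl⟩
      smul_mem' := by
        rintro c φ ⟨hφ1, hφ2⟩
        exact ⟨fun x hx => Submodule.smul_mem _ _ (hφ1 x hx),
          fun x hx => by simp [hφ2 x hx]⟩ } with hA0
  have memA0 : ∀ φ, φ ∈ A0 ↔ ((∀ x ∈ τ2, φ x ∈ τ1) ∧ ∀ x ∈ τ1, φ x = 0) := fun φ => Iff.rfl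
  -- transport complete reducibility through `e`
  obtain ⟨S', hS'inv, hS'inf, hS'sup⟩ := hcr (A0.comap e.toLinearMap) (by
    intro f hf x hx
    rw [Submodule.mem_comap] at hx ⊢
    rw [LinearEquiv.coe_coe, Stmt15Aux.eEnd_rho2 B hB N f hf x]
    rw [LinearEquiv.coe_coe] at hx
    rw [memA0] at hx ⊢
    constructor
    · intro y hy
      refine Submodule.sub_mem _ ?_ ?_
      · exact h1 f hf _ (hx.1 y hy)
      · exact hx.1 _ (h2 f hf y hy)
    · intro y hy
      simp [← he, hx.2 y hy, hx.2 _ (h1 f hf y hy)])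
  -- invariance of the image complement
  have hA0'inv : ∀ (f : Module.End ℂ V), IsSkew B f → ∀ φ ∈ S'.map e.toLinearMap,
      rho2 f ∘ₗ φ - φ ∘ₗ rho2 f ∈ S'.map e.toLinearMap := by
    rintro f hf _ ⟨x, hx, rfl⟩
    refine ⟨rho2 f x, hS'inv f hf x hx, ?_⟩
    rw [LinearEquiv.coe_coe, Stmt15Aux.eEnd_rho2 B hB N f hf x]
  -- the complement in endomorphism space
  have hinf : ∀ φ, φ ∈ A0 → φ ∈ S'.map e.toLinearMap → φ = 0 := by
    rintro φ hφ ⟨x, hx, rfl⟩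
    have : x ∈ A0.comap e.toLinearMap ⊓ S' := Submodule.mem_inf.mpr ⟨by rwa [Submodule.mem_comap], hx⟩
    rw [hS'inf] at this
    simp only [Submodule.mem_bot] at this
    rw [this]
    simp
  have hsup : ∀ φ : ((⨂[ℂ] _i : Fin N, V) →ₗ[ℂ] (⨂[ℂ] _i : Fin N, V)),
      ∃ φ1 ∈ A0, ∃ φ2 ∈ S'.map e.toLinearMap, φ1 + φ2 = φ := by
    intro φ
    have : e.symm φ ∈ A0.comap e.toLinearMap ⊔ S' := by rw [hS'sup]; trivial
    obtain ⟨x1, hx1, x2, hx2, hx⟩ := Submodule.mem_sup.mp this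
    refine ⟨e x1, by rwa [Submodule.mem_comap, LinearEquiv.coe_coe] at hx1,
      e x2, ⟨x2, hx2, rfl⟩, ?_⟩
    rw [← map_add, hx]
    simp
  -- a linear projection onto τ1
  obtain ⟨C, hC⟩ := Submodule.exists_isCompl τ1
  set φ0 : ((⨂[ℂ] _i : Fin N, V) →ₗ[ℂ] (⨂[ℂ] _i : Fin N, V)) :=
    τ1.subtype ∘ₗ (τ1.linearProjOfIsCompl C hC) with hφ0
  have hφ0a : ∀ x, φ0 x ∈ τ1 := fun x => (τ1.linearProjOfIsCompl C hC x).2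
  have hφ0b : ∀ x ∈ τ1, φ0 x = x := by
    intro x hx
    have := Submodule.linearProjOfIsCompl_apply_left hC ⟨x, hx⟩
    simp only [hφ0, LinearMap.comp_apply, Submodule.coe_subtype]
    exact congrArg Subtype.val this
  -- decompose φ0
  obtain ⟨ψ0, hψ0, ψ, hψS, hsumeq⟩ := hsup φ0
  have hψmem : ∀ x ∈ τ2, ψ x ∈ τ1 := by
    intro x hx
    have : ψ x = φ0 x - ψ0 x := by rw [← hsumeq]; simp
    rw [this]
    exact Submodule.sub_mem _ (hφ0a x) ((memA0 ψ0).mp hψ0 |>.1 x hx)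
  have hψid : ∀ x ∈ τ1, ψ x = x := by
    intro x hx
    have : ψ x = φ0 x - ψ0 x := by rw [← hsumeq]; simp
    rw [this, hφ0b x hx, (memA0 ψ0).mp hψ0 |>.2 x hx, sub_zero]
  have hψcomm : ∀ (f : Module.End ℂ V), IsSkew B f → rho2 f ∘ₗ ψ = ψ ∘ₗ rho2 f := by
    intro f hf
    have hd1 : rho2 f ∘ₗ ψ - ψ ∘ₗ rho2 f ∈ S'.map e.toLinearMap := hA0'inv f hf ψ hψS
    have hd2 : rho2 f ∘ₗ ψ - ψ ∘ₗ rho2 f ∈ A0 := by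
      rw [memA0]
      constructor
      · intro y hy
        refine Submodule.sub_mem _ ?_ ?_
        · exact h1 f hf _ (hψmem y hy)
        · exact hψmem _ (h2 f hf y hy)
      · intro y hy
        simp only [LinearMap.sub_apply, LinearMap.comp_apply]
        rw [hψid y hy, hψid _ (h1 f hf y hy), sub_self]
    have := hinf _ hd2 hd1
    exact sub_eq_zero.mp this
  refine ⟨ψ ∘ₗ τ2.subtype, ?_, ?_, ?_⟩
  · rintro _ ⟨x, rfl⟩
    exact hψmem x.1 x.2
  · intro x hx
    exact hψid x hx
  · intro f hf x
    have := LinearMap.congr_fun (hψcomm f hf) x.1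
    simp only [LinearMap.comp_apply] at this ⊢
    simp only [Submodule.coe_subtype]
    exact this.symm
end
end
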